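/- arXiv:1409.0230 — 12 statements merged into one kernel-verified Lean document; each statement's English description precedes it below -/
import Mathlib

section
/- Let α, β be real numbers and ξ = α + iβ ∈ ℂ. The additive subgroup of ℂ generated by {1, i, ξ} is dense in ℂ if and only if for all integers k, l, m, the equation kα + lβ + m = 0 implies k = l = m = 0. -/
open Complex

private lemma kron_mem_iff (ξ z : ℂ) :
    z ∈ AddSubgroup.closure ({1, Complex.I, ξ} : Set ℂ) ↔
      ∃ k l m : ℤ, z = k + l * Complex.I + m * ξ := by
  constructor
  · intro hz
    induction hz using AddSubgroup.closure_induction with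
    | mem x hx =>
      rcases hx with h | h | h
      · exact ⟨1, 0, 0, by simp [h]⟩
      · exact ⟨0, 1, 0, by simp [h]⟩
      · simp only [Set.mem_singleton_iff] at h
        exact ⟨0, 0, 1, by simp [h]⟩
    | zero => exact ⟨0, 0, 0, by simp⟩
    | add x y hx hy ihx ihy =>
      obtain ⟨k, l, m, rfl⟩ := ihx
      obtain ⟨k', l', m', rfl⟩ := ihy
      exact ⟨k + k', l + l', m + m', by push_cast; ring⟩
    | neg x hx ih =>
      obtain ⟨k, l, m, rfl⟩ := ih
      exact ⟨-k, -l, -m, by push_cast; ring⟩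
  · rintro ⟨k, l, m, rfl⟩
    have h1 : (1 : ℂ) ∈ AddSubgroup.closure ({1, Complex.I, ξ} : Set ℂ) :=
      AddSubgroup.subset_closure (by simp)
    have h2 : Complex.I ∈ AddSubgroup.closure ({1, Complex.I, ξ} : Set ℂ) :=
      AddSubgroup.subset_closure (by simp)
    have h3 : ξ ∈ AddSubgroup.closure ({1, Complex.I, ξ} : Set ℂ) :=
      AddSubgroup.subset_closure (by simp)
    have := add_mem (add_mem (zsmul_mem h1 k) (zsmul_mem h2 l)) (zsmul_mem h3 m)
    simpa [zsmul_eq_mul] using this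

private lemma kron_pigeon (α β : ℝ) {ε : ℝ} (hε : 0 < ε) :
    ∃ m₁ m₂ : ℕ, m₁ ≠ m₂ ∧ |Int.fract (m₁ * α) - Int.fract (m₂ * α)| < ε ∧
      |Int.fract (m₁ * β) - Int.fract (m₂ * β)| < ε := by
  set f : ℕ → ℝ × ℝ := fun m => (Int.fract (m * α), Int.fract (m * β)) with hf
  have hmem : ∀ m, f m ∈ (Set.Icc (0:ℝ) 1) ×ˢ (Set.Icc (0:ℝ) 1) := by
    intro m
    exact ⟨⟨Int.fract_nonneg _, (Int.fract_lt_one _).le⟩,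
      ⟨Int.fract_nonneg _, (Int.fract_lt_one _).le⟩⟩
  obtain ⟨L, -, φ, hφ, hconv⟩ := (isCompact_Icc.prod isCompact_Icc).tendsto_subseq hmem
  obtain ⟨N, hN⟩ := Metric.tendsto_atTop.mp hconv (ε / 2) (by positivity)
  have h1 := hN N le_rfl
  have h2 := hN (N + 1) (by omega)
  simp only [Function.comp] at h1 h2
  have hd : dist (f (φ (N + 1))) (f (φ N)) < ε := by
    calc dist (f (φ (N + 1))) (f (φ N)) ≤ dist (f (φ (N+1))) L + dist L (f (φ N)) :=
          dist_triangle _ _ _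
      _ < ε := by rw [dist_comm L]; linarith
  refine ⟨φ (N + 1), φ N, fun h => absurd (hφ.injective h) (by omega), ?_, ?_⟩
  · have := (le_max_left (dist (f (φ (N+1))).1 (f (φ N)).1)
      (dist (f (φ (N+1))).2 (f (φ N)).2)).trans_lt (by rw [← Prod.dist_eq]; exact hd)
    simpa [Real.dist_eq, hf] using this
  · have := (le_max_right (dist (f (φ (N+1))).1 (f (φ N)).1)
      (dist (f (φ (N+1))).2 (f (φ N)).2)).trans_lt (by rw [← Prod.dist_eq]; exact hd)
    simpa [Real.dist_eq, hf] using this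

private lemma kron_small (α β : ℝ)
    (hind : ∀ k l m : ℤ, (k : ℝ) * α + (l : ℝ) * β + (m : ℝ) = 0 → k = 0 ∧ l = 0 ∧ m = 0)
    (ξ : ℂ) (hξ : ξ = (α : ℂ) + (β : ℂ) * Complex.I) (ε : ℝ) (hε : 0 < ε) :
    ∃ z ∈ AddSubgroup.closure ({1, Complex.I, ξ} : Set ℂ), z ≠ 0 ∧ ‖z‖ < ε := by
  obtain ⟨m₁, m₂, hne, hα, hβ⟩ := kron_pigeon α β (show (0:ℝ) < ε/2 by linarith)
  set M : ℤ := (m₁ : ℤ) - m₂ with hM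
  set K : ℤ := ⌊(m₁ : ℝ) * α⌋ - ⌊(m₂ : ℝ) * α⌋ with hK
  set L : ℤ := ⌊(m₁ : ℝ) * β⌋ - ⌊(m₂ : ℝ) * β⌋ with hL
  have hM0 : M ≠ 0 := sub_ne_zero.mpr (by exact_mod_cast hne)
  have hzeq : ((-K : ℤ) : ℂ) + ((-L : ℤ) : ℂ) * Complex.I + (M : ℂ) * ξ
      = (((M : ℝ) * α - K : ℝ) : ℂ) + (((M : ℝ) * β - L : ℝ) : ℂ) * Complex.I := by
    rw [hξ]; push_cast; ring
  refine ⟨((-K : ℤ) : ℂ) + ((-L : ℤ) : ℂ) * Complex.I + (M : ℂ) * ξ,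
    (kron_mem_iff ξ _).mpr ⟨-K, -L, M, by push_cast; ring⟩, ?_, ?_⟩
  · intro h0
    rw [hzeq] at h0
    have hre : ((M : ℝ) * α - K : ℝ) = 0 := by
      have := congrArg Complex.re h0
      simpa using this
    have := hind M 0 (-K) (by push_cast; linarith)
    exact hM0 this.1
  · rw [hzeq]
    have h1 : (M : ℝ) * α - K = Int.fract (m₁ * α) - Int.fract (m₂ * α) := by
      unfold Int.fract; push_cast [hM, hK]; ring
    have h2 : (M : ℝ) * β - L = Int.fract (m₁ * β) - Int.fract (m₂ * β) := by
      unfold Int.fract; push_cast [hM, hL]; ring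
    calc ‖(((M : ℝ) * α - K : ℝ) : ℂ) + (((M : ℝ) * β - L : ℝ) : ℂ) * Complex.I‖
        ≤ |((M : ℝ) * α - K)| + |((M : ℝ) * β - L)| := by
          refine (Complex.norm_le_abs_re_add_abs_im _).trans ?_
          simp
      _ < ε := by rw [h1, h2]; linarith

private lemma kron_line (H : AddSubgroup ℂ)
    (hsmall : ∀ ε : ℝ, 0 < ε → ∃ z ∈ H, z ≠ 0 ∧ ‖z‖ < ε) :
    ∃ u : ℂ, ‖u‖ = 1 ∧ ∀ t : ℝ, t • u ∈ H.topologicalClosure := by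
  have hchoice : ∀ n : ℕ, ∃ z, z ∈ H ∧ z ≠ 0 ∧ ‖z‖ < 1 / (n + 1) := by
    intro n
    obtain ⟨z, hz, h0, hs⟩ := hsmall (1 / (n + 1)) (by positivity)
    exact ⟨z, hz, h0, hs⟩
  choose g hgH hg0 hgs using hchoice
  have habs : ∀ n, ‖g n‖ ≠ 0 := fun n => by
    simpa [norm_ne_zero_iff] using hg0 n
  set v : ℕ → ℂ := fun n => (‖g n‖)⁻¹ • g n with hv
  have hvmem : ∀ n, v n ∈ Metric.sphere (0 : ℂ) 1 := by
    intro n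
    simp only [mem_sphere_zero_iff_norm, hv, norm_smul,
      Real.norm_eq_abs, abs_inv, _root_.abs_abs]
    rw [_root_.abs_of_nonneg (norm_nonneg _)]
    exact inv_mul_cancel₀ (habs n)
  obtain ⟨u, humem, φ, hφ, hconv⟩ := (isCompact_sphere (0 : ℂ) 1).tendsto_subseq hvmem
  have hu1 : ‖u‖ = 1 := by
    simpa using mem_sphere_zero_iff_norm.mp humem
  refine ⟨u, hu1, ?_⟩
  have key : ∀ t : ℝ, 0 ≤ t → t • u ∈ H.topologicalClosure := by
    intro t ht
    have hd0 : Filter.Tendsto (fun n => ‖g (φ n)‖) Filter.atTop (nhds 0) := by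
      apply squeeze_zero (fun n => (norm_nonneg _)) (fun n => (hgs (φ n)).le.trans ?_)
      · exact tendsto_one_div_add_atTop_nhds_zero_nat
      · have : (n : ℝ) + 1 ≤ (φ n : ℝ) + 1 := by
          have : n ≤ φ n := hφ.le_apply
          exact_mod_cast add_le_add_left (Nat.cast_le.mpr this) 1
        rw [div_le_div_iff₀ (by positivity) (by positivity)]
        linarith
    set c : ℕ → ℝ := fun n => (⌊t / ‖g (φ n)‖⌋ : ℝ) * ‖g (φ n)‖ with hc
    have hct : Filter.Tendsto c Filter.atTop (nhds t) := by
      have hub : ∀ n, c n ≤ t := by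
        intro n
        have hpos : 0 < ‖g (φ n)‖ :=
          (norm_nonneg _).lt_of_ne' (habs (φ n))
        have := Int.floor_le (t / ‖g (φ n)‖)
        calc c n ≤ (t / ‖g (φ n)‖) * ‖g (φ n)‖ :=
              mul_le_mul_of_nonneg_right this hpos.le
          _ = t := by field_simp
      have hlb : ∀ n, t - ‖g (φ n)‖ ≤ c n := by
        intro n
        have hpos : 0 < ‖g (φ n)‖ :=
          (norm_nonneg _).lt_of_ne' (habs (φ n))
        have := Int.sub_one_lt_floor (t / ‖g (φ n)‖)
        have h2 : (t / ‖g (φ n)‖ - 1) * ‖g (φ n)‖ ≤ c n :=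
          mul_le_mul_of_nonneg_right (by linarith) hpos.le
        calc t - ‖g (φ n)‖
            = (t / ‖g (φ n)‖ - 1) * ‖g (φ n)‖ := by field_simp
          _ ≤ c n := h2
      have h1 : Filter.Tendsto (fun n => t - ‖g (φ n)‖) Filter.atTop (nhds t) := by
        simpa using (tendsto_const_nhds (x := t)).sub hd0
      exact tendsto_of_tendsto_of_tendsto_of_le_of_le h1 tendsto_const_nhds hlb hub
    have hw : Filter.Tendsto (fun n => c n • v (φ n)) Filter.atTop (nhds (t • u)) :=
      hct.smul hconv
    have heq : ∀ n, c n • v (φ n) = (⌊t / ‖g (φ n)‖⌋ : ℤ) • g (φ n) := by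
      intro n
      rw [hv]
      rw [smul_smul, hc]
      rw [mul_inv_cancel_right₀ (habs (φ n))]
      rw [← Int.cast_smul_eq_zsmul ℝ]
    have hmem : ∀ n, c n • v (φ n) ∈ (H : Set ℂ) := by
      intro n; rw [heq n]; exact zsmul_mem (hgH (φ n)) _
    have : t • u ∈ _root_.closure (H : Set ℂ) :=
      mem_closure_of_tendsto hw (Filter.Eventually.of_forall hmem)
    exact this
  intro t
  rcases le_or_gt 0 t with ht | ht
  · exact key t ht
  · have := key (-t) (by linarith)
    have h2 := neg_mem this
    simpa using h2

private lemma kron_abs_eq (u d : ℂ) (hu : u.re * u.re + u.im * u.im = 1) :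
    ‖d - (d.re * u.re + d.im * u.im) • u‖ = |u.re * d.im - u.im * d.re| := by
  rw [Complex.norm_def, ← Real.sqrt_sq_eq_abs]
  congr 1
  simp only [Complex.normSq_apply, Complex.sub_re, Complex.sub_im, Complex.real_smul,
    Complex.mul_re, Complex.mul_im, Complex.ofReal_re, Complex.ofReal_im]
  linear_combination ((d.re * u.re + d.im * u.im) ^ 2 - d.re ^ 2 - d.im ^ 2) * hu

/-- Let α, β be real numbers and ξ = α + iβ ∈ ℂ. The additive
subgroup of ℂ generated by {1, i, ξ} is dense in ℂ iff for all integers k, l, m,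
kα + lβ + m = 0 implies k = l = m = 0. -/
theorem dense_addSubgroup_iff (α β : ℝ) (ξ : ℂ) (hξ : ξ = (α : ℂ) + (β : ℂ) * Complex.I) :
    Dense ((AddSubgroup.closure {1, Complex.I, ξ} : AddSubgroup ℂ) : Set ℂ) ↔
      (∀ k l m : ℤ, (k : ℝ) * α + (l : ℝ) * β + (m : ℝ) = 0 → k = 0 ∧ l = 0 ∧ m = 0) := by
  constructor
  · intro hdense k l m hrel
    by_cases hkl : k = 0 ∧ l = 0
    · refine ⟨hkl.1, hkl.2, ?_⟩
      have : (m : ℝ) = 0 := by rw [hkl.1, hkl.2] at hrel; simpa using hrel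
      exact_mod_cast this
    · exfalso
      set F : ℂ →+ ℝ := AddMonoidHom.mk' (fun z => (k : ℝ) * z.re + (l : ℝ) * z.im)
        (by intro a b; simp only [Complex.add_re, Complex.add_im]; ring) with hF
      have hFcont : Continuous F := by
        exact (show Continuous (fun z : ℂ => (k : ℝ) * z.re + (l : ℝ) * z.im) from ((continuous_const.mul Complex.continuous_re).add
          (continuous_const.mul Complex.continuous_im)))
      have hsub : (AddSubgroup.closure {1, Complex.I, ξ} : Set ℂ) ⊆
          F ⁻¹' (Set.range ((↑) : ℤ → ℝ)) := by
        intro z hz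
        obtain ⟨a, b, c, rfl⟩ := (kron_mem_iff ξ z).mp hz
        refine ⟨a * k + b * l - c * m, ?_⟩
        simp only [hF, AddMonoidHom.mk'_apply, Set.mem_preimage]
        rw [hξ]
        push_cast
        simp only [Complex.add_re, Complex.add_im, Complex.mul_re, Complex.mul_im,
          Complex.I_re, Complex.I_im, Complex.intCast_re, Complex.intCast_im,
          Complex.ofReal_re, Complex.ofReal_im]
        linear_combination (-(c : ℝ)) * hrel
      have hclosed : IsClosed (F ⁻¹' (Set.range ((↑) : ℤ → ℝ))) :=
        (Int.isClosedEmbedding_coe_real.isClosed_range).preimage hFcont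
      have hall : ∀ z : ℂ, F z ∈ Set.range ((↑) : ℤ → ℝ) := by
        intro z
        have : z ∈ _root_.closure (AddSubgroup.closure {1, Complex.I, ξ} : Set ℂ) := hdense z
        exact closure_minimal hsub hclosed this
      have hkl2 : (0:ℝ) < (k:ℝ)^2 + (l:ℝ)^2 := by
        rcases not_and_or.mp hkl with h | h
        · have : (k:ℝ) ≠ 0 := Int.cast_ne_zero.mpr h
          positivity
        · have : (l:ℝ) ≠ 0 := Int.cast_ne_zero.mpr h
          positivity
      set z₀ : ℂ := ((k / (2*((k:ℝ)^2+(l:ℝ)^2)) : ℝ) : ℂ) +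
        ((l / (2*((k:ℝ)^2+(l:ℝ)^2)) : ℝ) : ℂ) * Complex.I with hz₀
      obtain ⟨n, hn⟩ := hall z₀
      have hFz₀ : F z₀ = 1/2 := by
        simp only [hF, AddMonoidHom.mk'_apply, hz₀]
        simp only [Complex.add_re, Complex.add_im, Complex.mul_re, Complex.mul_im,
          Complex.I_re, Complex.I_im, Complex.ofReal_re, Complex.ofReal_im]
        field_simp
        ring
      rw [hFz₀] at hn
      have h2n : ((2 * n : ℤ) : ℝ) = ((1 : ℤ) : ℝ) := by push_cast; linarith
      have := Int.cast_injective h2n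
      omega
  · intro hind
    set H := AddSubgroup.closure ({1, Complex.I, ξ} : Set ℂ) with hH
    obtain ⟨u, hu1, hline⟩ := kron_line H (kron_small α β hind ξ hξ)
    have hu : u.re * u.re + u.im * u.im = 1 := by
      have h := Complex.sq_norm u
      rw [hu1] at h
      simp only [Complex.normSq_apply] at h
      linarith [h]
    set F : ℂ →+ ℝ := AddMonoidHom.mk' (fun z => u.re * z.im - u.im * z.re)
      (by intro a b; simp only [Complex.add_re, Complex.add_im]; ring) with hF
    set S : AddSubgroup ℝ := H.map F with hS
    have hSdense : Dense (S : Set ℝ) := by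
      rcases AddSubgroup.dense_or_cyclic S with h | ⟨c, hc⟩
      · exact h
      · exfalso
        have h1 : F 1 ∈ S := ⟨1, AddSubgroup.subset_closure (by simp), rfl⟩
        have h2 : F Complex.I ∈ S := ⟨Complex.I, AddSubgroup.subset_closure (by simp), rfl⟩
        have h3 : F ξ ∈ S := ⟨ξ, AddSubgroup.subset_closure (by simp), rfl⟩
        rw [hc, AddSubgroup.mem_closure_singleton] at h1 h2 h3
        obtain ⟨a, ha⟩ := h1
        obtain ⟨b, hb⟩ := h2
        obtain ⟨e, he⟩ := h3
        have hF1 : F 1 = -u.im := by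
          simp [hF]
        have hFI : F Complex.I = u.re := by
          simp [hF]
        have hFξ : F ξ = u.re * β - u.im * α := by
          simp [hF, hξ]
        rw [hF1] at ha; rw [hFI] at hb; rw [hFξ] at he
        rw [zsmul_eq_mul] at ha hb he
        have hc0 : c ≠ 0 := by
          rintro rfl
          simp only [mul_zero] at ha hb
          have h1 : u.im = 0 := by linarith [ha]
          have h2 : u.re = 0 := hb.symm
          rw [h1, h2] at hu
          norm_num at hu
        have hrel : (a : ℝ) * α + (b : ℝ) * β + ((-e : ℤ) : ℝ) = 0 := by
          have : ((b:ℝ) * c) * β - (-((a:ℝ) * c)) * α = (e:ℝ) * c := by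
            rw [hb, ha, he]; ring
          push_cast
          have hcc : c * ((a : ℝ) * α + b * β - e) = 0 := by ring_nf; ring_nf at this; linarith
          have := mul_eq_zero.mp hcc
          rcases this with h | h
          · exact absurd h hc0
          · linarith
        obtain ⟨ha0, hb0, -⟩ := hind a b (-e) hrel
        rw [ha0] at ha; rw [hb0] at hb
        simp only [Int.cast_zero, zero_mul] at ha hb
        have h1 : u.im = 0 := by linarith [ha]
        have h2 : u.re = 0 := hb.symm
        rw [h1, h2] at hu
        norm_num at hu
    intro z
    have hmem : z ∈ _root_.closure ((H.topologicalClosure : AddSubgroup ℂ) : Set ℂ) := by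
      rw [Metric.mem_closure_iff]
      intro ε hε
      have hz' : F z ∈ _root_.closure (S : Set ℝ) := hSdense _
      rw [Metric.mem_closure_iff] at hz'
      obtain ⟨s, hsS, hds⟩ := hz' ε hε
      obtain ⟨h, hhH, rfl⟩ := hsS
      set d : ℂ := z - h with hd
      set t : ℝ := d.re * u.re + d.im * u.im with ht
      refine ⟨h + t • u, add_mem (AddSubgroup.le_topologicalClosure H hhH) (hline t), ?_⟩
      rw [Complex.dist_eq]
      have hzz : z - (h + t • u) = d - t • u := by rw [hd]; ring
      rw [hzz, ht, kron_abs_eq u d hu]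
      have hFd : u.re * d.im - u.im * d.re = F z - F h := by
        simp only [hF, AddMonoidHom.mk'_apply, hd, Complex.sub_re, Complex.sub_im]
        ring
      rw [hFd, ← Real.dist_eq]
      exact hds
    rw [AddSubgroup.topologicalClosure_coe, closure_closure] at hmem
    exact hmem
end

section
/- Let α, β be real numbers satisfying condition (*), let ξ = α + iβ, and let G be the additive subgroup of ℂ generated by {1, i, ξ}. Then for every nonzero z ∈ ℂ and every R > 0, the set of elements g of G lying on the real line through z (i.e. g = tz for some t ∈ ℝ) with |g| ≤ R is finite. -/
/-- Let α, β satisfy condition (*), ξ = α + iβ, and let G be the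
additive subgroup of ℂ generated by {1, i, ξ}. Then for every nonzero z ∈ ℂ and
every R > 0, the set of elements of G lying on the real line through z with
modulus ≤ R is finite. -/
theorem finite_inter_line_ball (α β : ℝ)
    (hstar : ∀ k l m : ℤ, (k : ℝ) * α + (l : ℝ) * β + (m : ℝ) = 0 → k = 0 ∧ l = 0 ∧ m = 0)
    (ξ : ℂ) (hξ : ξ = (α : ℂ) + (β : ℂ) * Complex.I)
    (z : ℂ) (hz : z ≠ 0) (R : ℝ) (hR : 0 < R) :
    {g : ℂ | g ∈ AddSubgroup.closure {1, Complex.I, ξ} ∧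
      (∃ t : ℝ, g = (t : ℂ) * z) ∧ ‖g‖ ≤ R}.Finite := by
  set T : Set ℂ := {g : ℂ | g ∈ AddSubgroup.closure {1, Complex.I, ξ} ∧
      (∃ t : ℝ, g = (t : ℂ) * z) ∧ ‖g‖ ≤ R} with hT
  -- every element of the closure has integer coordinates
  have hmem : ∀ g ∈ AddSubgroup.closure ({1, Complex.I, ξ} : Set ℂ),
      ∃ k l m : ℤ, g = (k : ℂ) + (l : ℂ) * Complex.I + (m : ℂ) * ξ := by
    let S : AddSubgroup ℂ :=
      { carrier := {g | ∃ k l m : ℤ, g = (k : ℂ) + (l : ℂ) * Complex.I + (m : ℂ) * ξ}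
        zero_mem' := ⟨0, 0, 0, by simp⟩
        add_mem' := by
          rintro a b ⟨k, l, m, rfl⟩ ⟨k', l', m', rfl⟩
          exact ⟨k + k', l + l', m + m', by push_cast; ring⟩
        neg_mem' := by
          rintro a ⟨k, l, m, rfl⟩
          exact ⟨-k, -l, -m, by push_cast; ring⟩ }
    intro g hg
    have hle : AddSubgroup.closure ({1, Complex.I, ξ} : Set ℂ) ≤ S := by
      rw [AddSubgroup.closure_le]
      intro x hx
      simp only [Set.mem_insert_iff, Set.mem_singleton_iff] at hx
      rcases hx with rfl | rfl | rfl
      · exact ⟨1, 0, 0, by simp⟩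
      · exact ⟨0, 1, 0, by simp⟩
      · exact ⟨0, 0, 1, by simp⟩
    exact hle hg
  -- representation in real/imaginary coordinates
  have hrep : ∀ k l m : ℤ, (k : ℂ) + (l : ℂ) * Complex.I + (m : ℂ) * ξ
      = (((k : ℝ) + (m : ℝ) * α : ℝ) : ℂ) + (((l : ℝ) + (m : ℝ) * β : ℝ) : ℂ) * Complex.I := by
    intro k l m
    rw [hξ]; push_cast; ring
  by_cases hex : ∃ g, g ∈ T ∧ g ≠ 0
  · obtain ⟨g1, hg1T, hg1ne⟩ := hex
    obtain ⟨hg1G, ⟨t1, ht1z⟩, hg1R⟩ := hg1T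
    obtain ⟨k1, l1, m1, hg1k⟩ := hmem g1 hg1G
    have ht1 : t1 ≠ 0 := by
      rintro rfl; apply hg1ne; rw [ht1z]; simp
    have hg1abs : 0 < ‖g1‖ := by
      simpa [norm_pos_iff] using hg1ne
    -- A1, B1 not both zero
    have hA1B1 : ((k1 : ℝ) + (m1 : ℝ) * α) ≠ 0 ∨ ((l1 : ℝ) + (m1 : ℝ) * β) ≠ 0 := by
      by_contra h
      push_neg at h
      apply hg1ne
      rw [hg1k, hrep, h.1, h.2]
      simp
    set Mr : ℝ := (R / ‖g1‖) * (|(k1 : ℝ)| + |(l1 : ℝ)| + |(m1 : ℝ)|) with hMr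
    set M : ℤ := ⌈Mr⌉ with hM
    have key : ∀ g ∈ T, ∃ k l m : ℤ,
        g = (k : ℂ) + (l : ℂ) * Complex.I + (m : ℂ) * ξ ∧
        |k| ≤ M ∧ |l| ≤ M ∧ |m| ≤ M := by
      rintro g ⟨hgG, ⟨t, htz⟩, hgR⟩
      obtain ⟨k, l, m, hgk⟩ := hmem g hgG
      set s : ℝ := t / t1 with hs
      have hgs : g = (s : ℝ) * g1 := by
        have ht : (t : ℂ) = ((s : ℝ) : ℂ) * (t1 : ℝ) := by
          rw [hs]; push_cast
          rw [div_mul_cancel₀ _ (show (t1:ℂ) ≠ 0 by exact_mod_cast ht1)]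
        rw [htz, ht1z, ht]; ring
      -- real and imaginary part equations
      have hAB : ((k : ℝ) + (m : ℝ) * α) = s * ((k1 : ℝ) + (m1 : ℝ) * α) ∧
          ((l : ℝ) + (m : ℝ) * β) = s * ((l1 : ℝ) + (m1 : ℝ) * β) := by
        have h := hgs
        rw [hgk, hg1k, hrep k l m, hrep k1 l1 m1] at h
        rw [Complex.ext_iff] at h
        constructor
        · have := h.1; simpa [Complex.mul_re] using this
        · have := h.2; simpa [Complex.mul_im] using this
      obtain ⟨hA, hB⟩ := hAB
      -- minors vanish
      have hmin := hstar (l * m1 - m * l1) (m * k1 - k * m1) (l * k1 - k * l1) (by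
        push_cast
        linear_combination ((k1 : ℝ) + (m1 : ℝ) * α) * hB - ((l1 : ℝ) + (m1 : ℝ) * β) * hA)
      have c1 : (l : ℝ) * m1 = (m : ℝ) * l1 := by exact_mod_cast sub_eq_zero.mp hmin.1
      have c2 : (m : ℝ) * k1 = (k : ℝ) * m1 := by exact_mod_cast sub_eq_zero.mp hmin.2.1
      have c3 : (l : ℝ) * k1 = (k : ℝ) * l1 := by exact_mod_cast sub_eq_zero.mp hmin.2.2
      -- each coordinate equals s times the corresponding coordinate of g1
      have hk : (k : ℝ) = s * k1 := by
        rcases hA1B1 with h1 | h1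
        · have : ((k : ℝ) - s * k1) * ((k1 : ℝ) + (m1 : ℝ) * α) = 0 := by
            linear_combination (k1 : ℝ) * hA - α * c2
          exact sub_eq_zero.mp ((mul_eq_zero.mp this).resolve_right h1)
        · have : ((k : ℝ) - s * k1) * ((l1 : ℝ) + (m1 : ℝ) * β) = 0 := by
            linear_combination (k1 : ℝ) * hB - c3 - β * c2
          exact sub_eq_zero.mp ((mul_eq_zero.mp this).resolve_right h1)
      have hl : (l : ℝ) = s * l1 := by
        rcases hA1B1 with h1 | h1
        · have : ((l : ℝ) - s * l1) * ((k1 : ℝ) + (m1 : ℝ) * α) = 0 := by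
            linear_combination (l1 : ℝ) * hA + c3 + α * c1
          exact sub_eq_zero.mp ((mul_eq_zero.mp this).resolve_right h1)
        · have : ((l : ℝ) - s * l1) * ((l1 : ℝ) + (m1 : ℝ) * β) = 0 := by
            linear_combination (l1 : ℝ) * hB + β * c1
          exact sub_eq_zero.mp ((mul_eq_zero.mp this).resolve_right h1)
      have hm : (m : ℝ) = s * m1 := by
        rcases hA1B1 with h1 | h1
        · have : ((m : ℝ) - s * m1) * ((k1 : ℝ) + (m1 : ℝ) * α) = 0 := by
            linear_combination (m1 : ℝ) * hA + c2
          exact sub_eq_zero.mp ((mul_eq_zero.mp this).resolve_right h1)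
        · have : ((m : ℝ) - s * m1) * ((l1 : ℝ) + (m1 : ℝ) * β) = 0 := by
            linear_combination (m1 : ℝ) * hB - c1
          exact sub_eq_zero.mp ((mul_eq_zero.mp this).resolve_right h1)
      -- bound on |s|
      have habs : ‖g‖ = |s| * ‖g1‖ := by
        rw [hgs]
        simp [norm_mul, Complex.norm_real, Real.norm_eq_abs]
      have hsle : |s| ≤ R / ‖g1‖ := by
        rw [le_div_iff₀ hg1abs]
        calc |s| * ‖g1‖ = ‖g‖ := habs.symm
          _ ≤ R := hgR
      have hsnn : (0:ℝ) ≤ R / ‖g1‖ := le_trans (abs_nonneg s) hsle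
      have hone : ∀ c1v : ℤ, |(c1v : ℝ)| ≤ |(k1 : ℝ)| + |(l1 : ℝ)| + |(m1 : ℝ)| → ∀ c : ℤ,
          (c : ℝ) = s * c1v → |c| ≤ M := by
        intro c1v hc1v c hc
        have h1 : |(c : ℝ)| ≤ Mr := by
          rw [hc, abs_mul, hMr]
          exact mul_le_mul hsle hc1v (abs_nonneg _) hsnn
        have h2 : ((|c| : ℤ) : ℝ) ≤ ((M : ℤ) : ℝ) := by
          rw [hM]
          calc ((|c| : ℤ) : ℝ) = |(c : ℝ)| := by push_cast; ring
            _ ≤ Mr := h1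
            _ ≤ (⌈Mr⌉ : ℝ) := Int.le_ceil Mr
        exact_mod_cast h2
      refine ⟨k, l, m, hgk, ?_, ?_, ?_⟩
      · refine hone k1 ?_ k hk
        have := abs_nonneg (l1 : ℝ); have := abs_nonneg (m1 : ℝ); linarith
      · refine hone l1 ?_ l hl
        have := abs_nonneg (k1 : ℝ); have := abs_nonneg (m1 : ℝ); linarith
      · refine hone m1 ?_ m hm
        have := abs_nonneg (k1 : ℝ); have := abs_nonneg (l1 : ℝ); linarith
    -- conclude: T is contained in a finite image
    have hbox : (Set.Icc ((-M, -M, -M) : ℤ × ℤ × ℤ) (M, M, M)).Finite := Set.finite_Icc _ _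
    refine Set.Finite.subset (hbox.image fun v => (v.1 : ℂ) + (v.2.1 : ℂ) * Complex.I + (v.2.2 : ℂ) * ξ) ?_
    intro g hgT
    obtain ⟨k, l, m, hgk, hk, hl, hm⟩ := key g hgT
    rw [abs_le] at hk hl hm
    exact ⟨(k, l, m), by
      simp only [Set.mem_Icc, Prod.le_def]
      exact ⟨⟨hk.1, hl.1, hm.1⟩, hk.2, hl.2, hm.2⟩, hgk.symm⟩
  · push_neg at hex
    apply Set.Finite.subset (Set.finite_singleton (0 : ℂ))
    intro g hg
    simp [hex g hg]
end

section
/- Let α, β be real numbers satisfying condition (*), let ξ = α + iβ, and let G be the additive subgroup of ℂ generated by {1, i, ξ}. Then 0 is an accumulation point of G: for every ε > 0 there exists g ∈ G with 0 < |g| < ε. -/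
lemma floor_eq_abs_sub_lt_one {x y : ℝ} (h : ⌊x⌋ = ⌊y⌋) : |x - y| < 1 := by
  rw [abs_sub_lt_iff]
  constructor
  · have h1 : x < ⌊x⌋ + 1 := Int.lt_floor_add_one x
    have h2 : (⌊y⌋ : ℝ) ≤ y := Int.floor_le y
    rw [h] at h1; linarith
  · have h1 : y < ⌊y⌋ + 1 := Int.lt_floor_add_one y
    have h2 : (⌊x⌋ : ℝ) ≤ x := Int.floor_le x
    rw [h] at h2; linarith

/-- Let α, β satisfy condition (*), ξ = α + iβ, and let G be the
additive subgroup of ℂ generated by {1, i, ξ}. Then 0 is an accumulation point of G: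
for every ε > 0 there exists g ∈ G with 0 < |g| < ε. -/
theorem zero_accumulation_point (α β : ℝ)
    (hstar : ∀ k l m : ℤ, (k : ℝ) * α + (l : ℝ) * β + (m : ℝ) = 0 → k = 0 ∧ l = 0 ∧ m = 0)
    (ξ : ℂ) (hξ : ξ = (α : ℂ) + (β : ℂ) * Complex.I) :
    ∀ ε : ℝ, 0 < ε → ∃ g : ℂ, g ∈ AddSubgroup.closure {1, Complex.I, ξ} ∧
      0 < ‖g‖ ∧ ‖g‖ < ε := by
  intro ε hε
  obtain ⟨N, hN⟩ := exists_nat_gt (2 / ε)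
  have h2ε : 0 < 2 / ε := by positivity
  have hN0 : (0:ℝ) < N := lt_trans h2ε hN
  -- pigeonhole on fractional parts
  set f : ℕ → ℤ × ℤ := fun n =>
    (⌊(N:ℝ) * Int.fract (n * α)⌋, ⌊(N:ℝ) * Int.fract (n * β)⌋) with hf
  have hmaps : ∀ n ∈ Finset.range (N * N + 1),
      f n ∈ Finset.Ico (0:ℤ) N ×ˢ Finset.Ico (0:ℤ) N := by
    intro n _
    have key : ∀ x : ℝ, ⌊(N:ℝ) * Int.fract x⌋ ∈ Finset.Ico (0:ℤ) N := by
      intro x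
      rw [Finset.mem_Ico]
      constructor
      · exact Int.floor_nonneg.2 (mul_nonneg hN0.le (Int.fract_nonneg x))
      · refine Int.floor_lt.2 ?_
        have := Int.fract_lt_one x
        calc (N:ℝ) * Int.fract x < (N:ℝ) * 1 := mul_lt_mul_of_pos_left this hN0
          _ = ((N:ℤ):ℝ) := by push_cast; ring
    exact Finset.mem_product.2 ⟨key _, key _⟩
  have hcard : (Finset.Ico (0:ℤ) (N:ℤ) ×ˢ Finset.Ico (0:ℤ) (N:ℤ)).card
      < (Finset.range (N * N + 1)).card := by
    rw [Finset.card_product, Finset.card_range, Int.card_Ico]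
    simp
  obtain ⟨n, hn, n', hn', hne, hfe⟩ :=
    Finset.exists_ne_map_eq_of_card_lt_of_maps_to hcard hmaps
  -- define the group element
  set k : ℤ := (n : ℤ) - (n' : ℤ) with hk
  set a : ℤ := ⌊(n:ℝ) * α⌋ - ⌊(n':ℝ) * α⌋ with ha
  set b : ℤ := ⌊(n:ℝ) * β⌋ - ⌊(n':ℝ) * β⌋ with hb
  set g : ℂ := k • ξ - (a • (1:ℂ) + b • Complex.I) with hg
  have hk0 : k ≠ 0 := by
    simp only [hk, sub_ne_zero]
    exact_mod_cast hne
  -- real and imaginary parts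
  have hre' : g.re = (k:ℝ) * α - a := by
    simp [hg, hξ, Complex.add_re, Complex.sub_re, Complex.mul_re]
  have him' : g.im = (k:ℝ) * β - b := by
    simp [hg, hξ, Complex.add_im, Complex.sub_im, Complex.mul_im]
  have hre : g.re = Int.fract ((n:ℝ) * α) - Int.fract ((n':ℝ) * α) := by
    rw [hre', hk, ha, Int.fract, Int.fract]
    push_cast
    ring
  have him : g.im = Int.fract ((n:ℝ) * β) - Int.fract ((n':ℝ) * β) := by
    rw [him', hk, hb, Int.fract, Int.fract]
    push_cast
    ring
  -- fractional parts are close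
  have habs : ∀ x y : ℝ, ⌊(N:ℝ) * Int.fract x⌋ = ⌊(N:ℝ) * Int.fract y⌋ →
      |Int.fract x - Int.fract y| < 1 / N := by
    intro x y h
    have h1 := floor_eq_abs_sub_lt_one h
    rw [← mul_sub, abs_mul, abs_of_pos hN0] at h1
    rw [lt_div_iff₀ hN0, mul_comm]
    exact h1
  have hfe1 := congrArg Prod.fst hfe
  have hfe2 := congrArg Prod.snd hfe
  simp only [hf] at hfe1 hfe2
  have hreb : |g.re| < 1 / N := by rw [hre]; exact habs _ _ hfe1
  have himb : |g.im| < 1 / N := by rw [him]; exact habs _ _ hfe2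
  refine ⟨g, ?_, ?_, ?_⟩
  · apply sub_mem
    · exact zsmul_mem (AddSubgroup.subset_closure (by simp)) k
    · exact add_mem (zsmul_mem (AddSubgroup.subset_closure (by simp)) a)
        (zsmul_mem (AddSubgroup.subset_closure (by simp)) b)
  · refine norm_pos_iff.mpr ?_
    intro hg0
    have hz : g.re = 0 := by rw [hg0]; simp
    rw [hre'] at hz
    have hre0 : (k:ℝ) * α + ((0:ℤ):ℝ) * β + ((-a : ℤ):ℝ) = 0 := by
      push_cast
      linarith
    exact hk0 (hstar k 0 (-a) hre0).1
  · calc ‖g‖ ≤ |g.re| + |g.im| := Complex.norm_le_abs_re_add_abs_im g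
      _ < 1 / N + 1 / N := add_lt_add hreb himb
      _ = 2 / N := by ring
      _ < ε := by
          rw [div_lt_iff₀ hN0]
          rw [div_lt_iff₀ hε] at hN
          linarith
end

section
/- Let u, v ∈ ℂ with Im(u/v) ≠ 0, let α, β be real numbers, and let w = αu + βv. The additive subgroup of ℂ generated by {u, v, w} is dense in ℂ if and only if for all integers k, l, m, the equation kα + lβ + m = 0 implies k = l = m = 0. -/
open AddSubgroup Filter Topology Complex

private lemma im_div_ne_zero_symm {u v : ℂ} (huv : (u / v).im ≠ 0) : (v / u).im ≠ 0 := by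
  have h1 : u / v ≠ 0 := fun h => huv (by rw [h]; simp)
  rw [show v / u = (u / v)⁻¹ by rw [inv_div]]
  rw [Complex.inv_im]
  have h2 : Complex.normSq (u / v) ≠ 0 := by simpa [Complex.normSq_eq_zero] using h1
  intro h
  rcases div_eq_zero_iff.mp h with h' | h'
  · exact huv (neg_eq_zero.mp h')
  · exact h2 h'

private lemma aux_forward (u v : ℂ) (huv : (u / v).im ≠ 0)
    (α β : ℝ) (w : ℂ) (hw : w = (α : ℂ) * u + (β : ℂ) * v)
    (hdense : Dense ((AddSubgroup.closure {u, v, w} : AddSubgroup ℂ) : Set ℂ))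
    (k l m : ℤ) (hrel : (k : ℝ) * α + (l : ℝ) * β + (m : ℝ) = 0) (hk : k ≠ 0) :
    False := by
  have hv : v ≠ 0 := by rintro rfl; simp at huv
  have hu : u ≠ 0 := by rintro rfl; simp at huv
  have him' : (v / u).im ≠ 0 := im_div_ne_zero_symm huv
  set ψ : ℂ →+ ℝ := AddMonoidHom.mk'
    (fun z => (k : ℝ) * ((z / v).im / (u / v).im) + (l : ℝ) * ((z / u).im / (v / u).im))
    (fun a b => by simp only [add_div, Complex.add_im]; ring) with hψ
  have hψdef : ∀ z : ℂ, ψ z = (k : ℝ) * ((z / v).im / (u / v).im)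
      + (l : ℝ) * ((z / u).im / (v / u).im) := fun z => rfl
  have hψu : ψ u = k := by
    rw [hψdef, div_self hu, div_self huv]
    simp
  have hψv : ψ v = l := by
    rw [hψdef, div_self hv, div_self him']
    simp
  have h1 : (w / v).im = α * (u / v).im := by
    rw [hw, add_div, mul_div_assoc, mul_div_assoc, div_self hv, mul_one]
    simp [Complex.add_im, Complex.im_ofReal_mul, Complex.ofReal_im]
  have h2 : (w / u).im = β * (v / u).im := by
    rw [hw, add_div, mul_div_assoc, mul_div_assoc, div_self hu, mul_one]
    simp [Complex.add_im, Complex.im_ofReal_mul, Complex.ofReal_im]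
  have hψw : ψ w = -(m : ℝ) := by
    rw [hψdef, h1, h2, mul_div_assoc, mul_div_assoc, div_self huv, div_self him']
    simp only [mul_one]
    linarith
  have hmaps : AddSubgroup.closure ({u, v, w} : Set ℂ)
      ≤ AddSubgroup.comap ψ (AddSubgroup.zmultiples (1 : ℝ)) := by
    rw [AddSubgroup.closure_le]
    intro z hz
    simp only [Set.mem_insert_iff, Set.mem_singleton_iff] at hz
    rcases hz with rfl | rfl | rfl
    · exact ⟨k, by simp [hψu]⟩
    · exact ⟨l, by simp [hψv]⟩
    · exact ⟨-m, by simp [hψw]⟩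
  have hcont : Continuous fun z : ℂ => ψ z := by
    simp only [hψdef]
    have c1 : Continuous fun z : ℂ => (z / v).im :=
      Complex.continuous_im.comp (continuous_id.div_const v)
    have c2 : Continuous fun z : ℂ => (z / u).im :=
      Complex.continuous_im.comp (continuous_id.div_const u)
    exact (continuous_const.mul (c1.div_const _)).add (continuous_const.mul (c2.div_const _))
  have hks : (k : ℝ) ≠ 0 := Int.cast_ne_zero.mpr hk
  set s0 : ℝ := 1 / (2 * (k : ℝ)) with hs0
  set z0 : ℂ := (s0 : ℂ) * u with hz0
  have hψz0 : ψ z0 = 1 / 2 := by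
    rw [hψdef]
    have e1 : (z0 / v).im = s0 * (u / v).im := by
      rw [hz0, mul_div_assoc, Complex.im_ofReal_mul]
    have e2 : (z0 / u).im = 0 := by
      rw [hz0, mul_div_assoc, div_self hu, mul_one, Complex.ofReal_im]
    rw [e1, e2, mul_div_assoc, div_self huv, zero_div, mul_zero, add_zero, mul_one, hs0]
    field_simp
  have hmem : ψ z0 ∈ _root_.closure (Set.range ((↑) : ℤ → ℝ)) := by
    apply map_mem_closure hcont (hdense z0)
    intro z hz
    obtain ⟨n, hn⟩ := AddSubgroup.mem_zmultiples_iff.mp (hmaps hz)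
    exact ⟨n, by simpa using hn⟩
  rw [Int.isClosedEmbedding_coe_real.isClosed_range.closure_eq, hψz0] at hmem
  obtain ⟨n, hn⟩ := hmem
  have h2n : (2 * n : ℤ) = 1 := by
    have : ((2 * n : ℤ) : ℝ) = ((1 : ℤ) : ℝ) := by push_cast; linarith
    exact_mod_cast this
  omega

/-- Let u, v ∈ ℂ with Im(u/v) ≠ 0, α, β ∈ ℝ, and w = αu + βv.
The additive subgroup of ℂ generated by {u, v, w} is dense in ℂ iff for all
integers k, l, m, kα + lβ + m = 0 implies k = l = m = 0. -/
theorem dense_addSubgroup_uvw_iff (u v : ℂ) (huv : (u / v).im ≠ 0)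
    (α β : ℝ) (w : ℂ) (hw : w = (α : ℂ) * u + (β : ℂ) * v) :
    Dense ((AddSubgroup.closure {u, v, w} : AddSubgroup ℂ) : Set ℂ) ↔
      (∀ k l m : ℤ, (k : ℝ) * α + (l : ℝ) * β + (m : ℝ) = 0 → k = 0 ∧ l = 0 ∧ m = 0) := by
  have hv : v ≠ 0 := by rintro rfl; simp at huv
  have hu : u ≠ 0 := by rintro rfl; simp at huv
  have him' : (v / u).im ≠ 0 := im_div_ne_zero_symm huv
  constructor
  · intro hdense k l m hrel
    have hk : k = 0 := by
      by_contra hk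
      exact aux_forward u v huv α β w hw hdense k l m hrel hk
    have hl : l = 0 := by
      by_contra hl
      have hdense' : Dense ((AddSubgroup.closure {v, u, w} : AddSubgroup ℂ) : Set ℂ) := by
        rwa [Set.insert_comm]
      exact aux_forward v u him' β α w (by rw [hw]; ring) hdense' l k m (by linarith) hl
    refine ⟨hk, hl, ?_⟩
    have hm : (m : ℝ) = 0 := by rw [hk, hl] at hrel; simpa using hrel
    exact_mod_cast hm
  · intro hstar
    set G : AddSubgroup ℂ := AddSubgroup.closure {u, v, w} with hGdef
    have huG : u ∈ G := AddSubgroup.subset_closure (by simp)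
    have hvG : v ∈ G := AddSubgroup.subset_closure (by simp)
    have hwG : w ∈ G := AddSubgroup.subset_closure (by simp)
    set H : AddSubgroup ℂ := G.topologicalClosure with hHdef
    have hGH : G ≤ H := G.le_topologicalClosure
    have hHclosed : IsClosed (H : Set ℂ) := G.isClosed_topologicalClosure
    have hHcoe : (H : Set ℂ) = _root_.closure (G : Set ℂ) := rfl
    rw [← dense_closure, ← hHcoe]
    -- independence of u, v over ℝ
    have hindep : ∀ s t : ℝ, (s : ℂ) * u + (t : ℂ) * v = 0 → s = 0 ∧ t = 0 := by
      intro s t hst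
      have h1 := congrArg (fun z : ℂ => (z / v).im) hst
      simp only [add_div, mul_div_assoc, div_self hv, mul_one, Complex.add_im,
        Complex.im_ofReal_mul, Complex.ofReal_im, zero_div, Complex.zero_im] at h1
      have hs : s = 0 := by
        rcases mul_eq_zero.mp (by linarith : s * (u / v).im = 0) with h | h
        · exact h
        · exact absurd h huv
      refine ⟨hs, ?_⟩
      rw [hs] at hst
      simp only [Complex.ofReal_zero, zero_mul, zero_add, mul_eq_zero] at hst
      rcases hst with h | h
      · exact_mod_cast h
      · exact absurd h hv
    by_cases hnd : ∀ ε > (0 : ℝ), ∃ z ∈ H, z ≠ 0 ∧ ‖z‖ < ε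
    · -- non-discrete case: H contains a line, then a functional argument
      have hseq : ∀ j : ℕ, ∃ z, z ∈ H ∧ z ≠ 0 ∧ ‖z‖ < 1 / (j + 1) := by
        intro j
        obtain ⟨z, h1, h2, h3⟩ := hnd (1 / (j + 1)) (by positivity)
        exact ⟨z, h1, h2, h3⟩
      choose f hfH hf0 hfn using hseq
      have hfpos : ∀ j, 0 < ‖f j‖ := fun j => norm_pos_iff.mpr (hf0 j)
      have hdmem : ∀ j, ‖f j‖⁻¹ • f j ∈ Metric.sphere (0 : ℂ) 1 := by
        intro j
        rw [mem_sphere_zero_iff_norm, norm_smul, norm_inv, norm_norm]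
        exact inv_mul_cancel₀ (hfpos j).ne'
      obtain ⟨d, hdmem', φ, hφ, hφtend⟩ := (isCompact_sphere (0 : ℂ) 1).tendsto_subseq hdmem
      have hd1 : ‖d‖ = 1 := mem_sphere_zero_iff_norm.mp hdmem'
      have hd0 : d ≠ 0 := by intro h; rw [h, norm_zero] at hd1; norm_num at hd1
      have hcto : Tendsto (fun j => ‖f (φ j)‖) atTop (𝓝 0) := by
        apply squeeze_zero (fun j => (hfpos _).le) (fun j => ?_)
          tendsto_one_div_add_atTop_nhds_zero_nat
        have h1 : ‖f (φ j)‖ < 1 / (φ j + 1) := hfn (φ j)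
        have h2 : (1 : ℝ) / (φ j + 1) ≤ 1 / (j + 1) := by
          apply one_div_le_one_div_of_le (by positivity)
          have : j ≤ φ j := hφ.le_apply
          push_cast
          linarith [(Nat.cast_le (α := ℝ)).mpr this]
        linarith
      have hline : ∀ t : ℝ, t • d ∈ H := by
        intro t
        have hwmem : ∀ j, (⌊t / ‖f (φ j)‖⌋ : ℤ) • f (φ j) ∈ (H : Set ℂ) :=
          fun j => H.zsmul_mem (hfH _) _
        suffices htend : Tendsto (fun j => (⌊t / ‖f (φ j)‖⌋ : ℤ) • f (φ j)) atTop (𝓝 (t • d)) from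
          hHclosed.mem_of_tendsto htend (Filter.Eventually.of_forall hwmem)
        have heq : ∀ j, (⌊t / ‖f (φ j)‖⌋ : ℤ) • f (φ j)
            = ((⌊t / ‖f (φ j)‖⌋ : ℝ) * ‖f (φ j)‖) • (‖f (φ j)‖⁻¹ • f (φ j)) := by
          intro j
          rw [smul_smul, mul_assoc, mul_inv_cancel₀ (hfpos _).ne', mul_one,
            ← Int.cast_smul_eq_zsmul ℝ]
        rw [show (fun j => (⌊t / ‖f (φ j)‖⌋ : ℤ) • f (φ j)) = fun j => ((⌊t / ‖f (φ j)‖⌋ : ℝ) * ‖f (φ j)‖) • (‖f (φ j)‖⁻¹ • f (φ j)) from funext heq]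
        apply Filter.Tendsto.smul ?_ hφtend
        apply tendsto_of_tendsto_of_tendsto_of_le_of_le
          (g := fun j => t - ‖f (φ j)‖) (h := fun _ => t)
          (by simpa using tendsto_const_nhds.sub hcto) tendsto_const_nhds
        · intro j
          have hc := hfpos (φ j)
          have hq2 : t / ‖f (φ j)‖ - 1 < (⌊t / ‖f (φ j)‖⌋ : ℝ) := by
            have := Int.sub_one_lt_floor (t / ‖f (φ j)‖)
            exact_mod_cast this
          have htc : t / ‖f (φ j)‖ * ‖f (φ j)‖ = t := div_mul_cancel₀ t hc.ne'
          nlinarith [hq2, hc, htc]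
        · intro j
          have hc := hfpos (φ j)
          have hq1 : (⌊t / ‖f (φ j)‖⌋ : ℝ) ≤ t / ‖f (φ j)‖ := Int.floor_le _
          have htc : t / ‖f (φ j)‖ * ‖f (φ j)‖ = t := div_mul_cancel₀ t hc.ne'
          nlinarith [hq1, hc, htc]
      set ψd : ℂ →+ ℝ := AddMonoidHom.mk' (fun z => (z / d).im)
        (fun a b => by simp [add_div]) with hψd
      have hψddef : ∀ z : ℂ, ψd z = (z / d).im := fun z => rfl
      have hψid : ψd (Complex.I * d) = 1 := by
        rw [hψddef, mul_div_assoc, div_self hd0, mul_one, Complex.I_im]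
      have hcoord : ∀ z : ℂ, (z / d).im = 0 → z = ((z / d).re : ℝ) • d := by
        intro z hz
        have hzd : z / d = ((z / d).re : ℂ) := by
          apply Complex.ext
          · simp
          · simpa using hz
        calc z = z / d * d := (div_mul_cancel₀ z hd0).symm
          _ = ((z / d).re : ℂ) * d := by rw [← hzd]
          _ = ((z / d).re : ℝ) • d := by rw [Complex.real_smul]
      have hker : ∀ z : ℂ, ψd z = 0 → z ∈ H := by
        intro z hz
        rw [hcoord z hz]
        exact hline _
      have hsm : ∀ (r : ℝ) (y : ℂ), ψd (r • y) = r * ψd y := by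
        intro r y
        rw [hψddef, hψddef, Complex.real_smul, mul_div_assoc, Complex.im_ofReal_mul]
      rcases (AddSubgroup.map ψd H).dense_or_cyclic with hdenseM | ⟨c, hc⟩
      · -- M dense ⇒ H dense
        rw [Metric.dense_iff]
        intro z r hr
        have hz' : ψd z ∈ _root_.closure ((AddSubgroup.map ψd H : AddSubgroup ℝ) : Set ℝ) :=
          hdenseM _
        rw [Metric.mem_closure_iff] at hz'
        obtain ⟨mm, hmm, hdist⟩ := hz' r hr
        obtain ⟨h0, hh0, rfl⟩ := hmm
        refine ⟨z + ((ψd h0 - ψd z : ℝ)) • (Complex.I * d), ?_, ?_⟩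
        · rw [Metric.mem_ball, dist_eq_norm]
          simp only [add_sub_cancel_left]
          rw [norm_smul, norm_mul, Complex.norm_I, hd1, one_mul, mul_one, Real.norm_eq_abs]
          rw [Real.dist_eq] at hdist
          rw [abs_sub_comm]
          exact hdist
        · have hzero : ψd (z + (ψd h0 - ψd z) • (Complex.I * d) - h0) = 0 := by
            rw [map_sub, map_add, hsm, hψid]
            ring
          have hmem := H.add_mem (hker _ hzero) hh0
          simpa using hmem
      · -- M cyclic ⇒ contradiction
        exfalso
        have hmemM : ∀ z, z ∈ H → ∃ n : ℤ, n • c = ψd z := by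
          intro z hz
          have hmap : ψd z ∈ AddSubgroup.map ψd H := AddSubgroup.mem_map_of_mem _ hz
          rw [hc] at hmap
          exact AddSubgroup.mem_closure_singleton.mp hmap
        obtain ⟨p, hp⟩ := hmemM u (hGH huG)
        obtain ⟨r, hr⟩ := hmemM v (hGH hvG)
        obtain ⟨s, hs⟩ := hmemM w (hGH hwG)
        rw [zsmul_eq_mul] at hp hr hs
        have hψw : ψd w = α * ψd u + β * ψd v := by
          rw [hψddef, hψddef, hψddef, hw, add_div, mul_div_assoc, mul_div_assoc]
          simp [Complex.add_im, Complex.im_ofReal_mul]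
        have hu0 : ψd u = 0 ∧ ψd v = 0 := by
          rcases eq_or_ne c 0 with rfl | hc0
          · constructor
            · rw [← hp]; ring
            · rw [← hr]; ring
          · have hkey : ((p : ℝ) * α + (r : ℝ) * β + ((-s : ℤ) : ℝ)) * c = 0 := by
              have h3 : (s : ℝ) * c = α * ((p : ℝ) * c) + β * ((r : ℝ) * c) := by
                rw [hp, hr, hs, hψw]
              push_cast
              nlinarith [h3]
            rcases mul_eq_zero.mp hkey with h | h
            · obtain ⟨hp0, hr0, -⟩ := hstar p r (-s) h
              constructor
              · rw [← hp, hp0]; simp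
              · rw [← hr, hr0]; simp
            · exact absurd h hc0
        obtain ⟨hψu0, hψv0⟩ := hu0
        have hud : u = ((u / d).re : ℝ) • d := hcoord u (by rw [← hψddef]; exact hψu0)
        have hvd : v = ((v / d).re : ℝ) • d := hcoord v (by rw [← hψddef]; exact hψv0)
        have hvre : (v / d).re ≠ 0 := by
          intro h
          apply hv
          rw [hvd, h]
          simp
        apply huv
        rw [hud, hvd, Complex.real_smul, Complex.real_smul,
          mul_div_mul_right _ _ hd0, ← Complex.ofReal_div, Complex.ofReal_im]
    · -- discrete case: contradiction with (*)
      exfalso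
      push_neg at hnd
      obtain ⟨ε, hε, hsep⟩ := hnd
      have hupos : 0 < ‖u‖ := norm_pos_iff.mpr hu
      have hvpos : 0 < ‖v‖ := norm_pos_iff.mpr hv
      obtain ⟨N, hN⟩ := exists_nat_gt ((‖u‖ + ‖v‖) / ε)
      have hNR : (0 : ℝ) < N := lt_trans (by positivity) hN
      have hNpos : 0 < N := by exact_mod_cast hNR
      have hfr : ∀ x : ℝ, ⌊Int.fract x * N⌋₊ < N := by
        intro x
        have h0 : (0 : ℝ) ≤ Int.fract x * N := mul_nonneg (Int.fract_nonneg x) (Nat.cast_nonneg N)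
        rw [Nat.floor_lt h0]
        calc Int.fract x * N < 1 * N := by
              exact mul_lt_mul_of_pos_right (Int.fract_lt_one x) hNR
          _ = N := one_mul _
      have : Nonempty (Fin N) := ⟨⟨0, hNpos⟩⟩
      set g : ℤ → Fin N × Fin N := fun n =>
        (⟨⌊Int.fract ((n : ℝ) * α) * N⌋₊, hfr _⟩, ⟨⌊Int.fract ((n : ℝ) * β) * N⌋₊, hfr _⟩) with hg
      obtain ⟨m, m', hmm', hgm⟩ := Finite.exists_ne_map_eq_of_infinite g
      have hclose : ∀ x y : ℝ, ⌊Int.fract x * N⌋₊ = ⌊Int.fract y * N⌋₊ →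
          |Int.fract x - Int.fract y| < 1 / N := by
        intro x y hxy
        have hx0 : (0 : ℝ) ≤ Int.fract x * N := mul_nonneg (Int.fract_nonneg x) (Nat.cast_nonneg N)
        have hy0 : (0 : ℝ) ≤ Int.fract y * N := mul_nonneg (Int.fract_nonneg y) (Nat.cast_nonneg N)
        have h1 : Int.fract x * N < Int.fract y * N + 1 := by
          calc Int.fract x * N < ⌊Int.fract x * N⌋₊ + 1 := Nat.lt_floor_add_one _
            _ = ⌊Int.fract y * N⌋₊ + 1 := by rw [hxy]
            _ ≤ Int.fract y * N + 1 := by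
                have := Nat.floor_le hy0
                linarith
        have h2 : Int.fract y * N < Int.fract x * N + 1 := by
          calc Int.fract y * N < ⌊Int.fract y * N⌋₊ + 1 := Nat.lt_floor_add_one _
            _ = ⌊Int.fract x * N⌋₊ + 1 := by rw [hxy]
            _ ≤ Int.fract x * N + 1 := by
                have := Nat.floor_le hx0
                linarith
        rw [abs_sub_lt_iff]
        constructor <;> rw [lt_div_iff₀ hNR] <;> nlinarith
      have heltG : ∀ n : ℤ, ((Int.fract ((n : ℝ) * α) : ℝ) : ℂ) * u
          + ((Int.fract ((n : ℝ) * β) : ℝ) : ℂ) * v ∈ G := by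
        intro n
        have h := G.sub_mem (G.zsmul_mem hwG n)
          (G.add_mem (G.zsmul_mem huG ⌊(n : ℝ) * α⌋) (G.zsmul_mem hvG ⌊(n : ℝ) * β⌋))
        convert h using 1
        rw [hw]
        simp only [zsmul_eq_mul, Int.fract]
        push_cast
        ring
      set δ1 : ℝ := Int.fract ((m : ℝ) * α) - Int.fract ((m' : ℝ) * α) with hδ1
      set δ2 : ℝ := Int.fract ((m : ℝ) * β) - Int.fract ((m' : ℝ) * β) with hδ2
      have hzH : ((δ1 : ℝ) : ℂ) * u + ((δ2 : ℝ) : ℂ) * v ∈ H := by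
        have hmem := hGH (G.sub_mem (heltG m) (heltG m'))
        convert hmem using 1
        push_cast [hδ1, hδ2]
        ring
      have hδ1lt : |δ1| < 1 / N :=
        hclose _ _ (congrArg (fun pq => pq.1.1) hgm)
      have hδ2lt : |δ2| < 1 / N :=
        hclose _ _ (congrArg (fun pq => pq.2.1) hgm)
      have hnorm : ‖((δ1 : ℝ) : ℂ) * u + ((δ2 : ℝ) : ℂ) * v‖ < ε := by
        have hb : ‖((δ1 : ℝ) : ℂ) * u + ((δ2 : ℝ) : ℂ) * v‖ ≤ |δ1| * ‖u‖ + |δ2| * ‖v‖ := by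
          calc ‖((δ1 : ℝ) : ℂ) * u + ((δ2 : ℝ) : ℂ) * v‖
              ≤ ‖((δ1 : ℝ) : ℂ) * u‖ + ‖((δ2 : ℝ) : ℂ) * v‖ := norm_add_le _ _
            _ = |δ1| * ‖u‖ + |δ2| * ‖v‖ := by
                rw [norm_mul, norm_mul, Complex.norm_real, Complex.norm_real,
                  Real.norm_eq_abs, Real.norm_eq_abs]
        have hfin : (‖u‖ + ‖v‖) / N < ε := by
          rw [div_lt_iff₀ hNR]
          have := (div_lt_iff₀ hε).mp hN
          nlinarith
        have hd1' : |δ1| * ‖u‖ ≤ (1 / N) * ‖u‖ :=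
          mul_le_mul_of_nonneg_right hδ1lt.le (norm_nonneg u)
        have hd2' : |δ2| * ‖v‖ ≤ (1 / N) * ‖v‖ :=
          mul_le_mul_of_nonneg_right hδ2lt.le (norm_nonneg v)
        have : (1 / N) * ‖u‖ + (1 / N) * ‖v‖ = (‖u‖ + ‖v‖) / N := by ring
        linarith
      rcases eq_or_ne (((δ1 : ℝ) : ℂ) * u + ((δ2 : ℝ) : ℂ) * v) 0 with hzero | hne
      · obtain ⟨e1, e2⟩ := hindep δ1 δ2 hzero
        have hf : Int.fract ((m : ℝ) * α) = Int.fract ((m' : ℝ) * α) := by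
          have := hδ1 ▸ e1
          linarith [sub_eq_zero.mp this]
        have hrel : ((m - m' : ℤ) : ℝ) * α + ((0 : ℤ) : ℝ) * β
            + ((⌊(m' : ℝ) * α⌋ - ⌊(m : ℝ) * α⌋ : ℤ) : ℝ) = 0 := by
          simp only [Int.fract] at hf
          push_cast
          linarith
        have := (hstar _ _ _ hrel).1
        apply hmm'
        omega
      · exact absurd (hsep _ hzH hne) (not_le.mpr hnorm)
end

section
/- Let u, v ∈ ℂ with Im(u/v) ≠ 0, let α, β be real numbers with αu + βv = 1, and set ξ = e^{2πiu}, η = e^{2πiv}. Then the set {ξ^m · η^n : m, n ∈ ℤ} is dense in ℂ if and only if for all integers k, l, m, the equation kα + lβ + m = 0 implies k = l = m = 0. -/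
open Complex

lemma dense1D (s : ℝ) (hs : Irrational s) :
    Dense {x : ℝ | ∃ m n : ℤ, x = m * s + n} := by
  have h : Dense ((AddSubgroup.closure {s, 1} : AddSubgroup ℝ) : Set ℝ) := by
    rcases AddSubgroup.dense_or_cyclic (AddSubgroup.closure {s, 1}) with h | ⟨a, ha⟩
    · exact h
    · exfalso
      have hsm : s ∈ AddSubgroup.closure ({s, 1} : Set ℝ) :=
        AddSubgroup.subset_closure (by simp)
      have h1m : (1 : ℝ) ∈ AddSubgroup.closure ({s, 1} : Set ℝ) :=
        AddSubgroup.subset_closure (by simp)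
      rw [ha, AddSubgroup.mem_closure_singleton] at hsm h1m
      obtain ⟨m, hm⟩ := hsm
      obtain ⟨n, hn⟩ := h1m
      have hn0 : n ≠ 0 := by rintro rfl; simp at hn
      have key : (n : ℝ) * s = m := by
        have h2 : (m * n) • a = m • (1 : ℝ) := by rw [← hn, smul_smul]
        rw [show (m * n : ℤ) = n * m by ring, ← smul_smul, hm] at h2
        simpa [zsmul_eq_mul] using h2
      have : s = (m : ℝ) / n := by
        field_simp at key ⊢; linarith
      exact hs ⟨(m : ℚ)/n, by push_cast [this]; norm_num⟩
  apply h.mono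
  intro x hx
  induction hx using AddSubgroup.closure_induction with
  | mem y hy =>
      rcases hy with rfl | rfl
      · exact ⟨1, 0, by simp⟩
      · exact ⟨0, 1, by simp⟩
  | zero => exact ⟨0, 0, by simp⟩
  | add a b _ _ ha hb =>
      obtain ⟨m1, n1, rfl⟩ := ha; obtain ⟨m2, n2, rfl⟩ := hb
      exact ⟨m1 + m2, n1 + n2, by push_cast; ring⟩
  | neg a _ ha =>
      obtain ⟨m, n, rfl⟩ := ha
      exact ⟨-m, -n, by push_cast; ring⟩

lemma kronecker2 (α β : ℝ)
    (hstar : ∀ k l m : ℤ, (k : ℝ) * α + (l : ℝ) * β + (m : ℝ) = 0 → k = 0 ∧ l = 0 ∧ m = 0) :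
    Dense {p : ℝ × ℝ | ∃ k m n : ℤ, p = ((m : ℝ) + k * α, (n : ℝ) + k * β)} := by
  classical
  set A : AddSubgroup (ℝ × ℝ) :=
    AddSubgroup.closure {((1:ℝ), (0:ℝ)), ((0:ℝ), (1:ℝ)), (α, β)} with hA
  have hsub : (A : Set (ℝ × ℝ)) ⊆
      {p : ℝ × ℝ | ∃ k m n : ℤ, p = ((m : ℝ) + k * α, (n : ℝ) + k * β)} := by
    intro x hx
    induction hx using AddSubgroup.closure_induction with
    | mem y hy =>
        rcases hy with rfl | rfl | rfl
        · exact ⟨0, 1, 0, by norm_num⟩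
        · exact ⟨0, 0, 1, by norm_num⟩
        · exact ⟨1, 0, 0, by norm_num⟩
    | zero => exact ⟨0, 0, 0, by norm_num; rfl⟩
    | add a b _ _ ha hb =>
        obtain ⟨k1, m1, n1, rfl⟩ := ha; obtain ⟨k2, m2, n2, rfl⟩ := hb
        exact ⟨k1 + k2, m1 + m2, n1 + n2, by simp [Prod.ext_iff]; constructor <;> push_cast <;> ring⟩
    | neg a _ ha =>
        obtain ⟨k, m, n, rfl⟩ := ha
        exact ⟨-k, -m, -n, by simp [Prod.ext_iff]; constructor <;> push_cast <;> ring⟩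
  apply Dense.mono hsub
  -- reduce to showing every point lies in the topological closure H
  set H : AddSubgroup (ℝ × ℝ) := A.topologicalClosure with hH
  have hHclosed : IsClosed (H : Set (ℝ × ℝ)) := AddSubgroup.isClosed_topologicalClosure A
  have hmem : ∀ k m n : ℤ, (((m : ℝ) + k * α, (n : ℝ) + k * β) : ℝ × ℝ) ∈ H := by
    intro k m n
    have h1 : ((1:ℝ), (0:ℝ)) ∈ A := AddSubgroup.subset_closure (by simp)
    have h2 : ((0:ℝ), (1:ℝ)) ∈ A := AddSubgroup.subset_closure (by simp)
    have h3 : ((α, β) : ℝ × ℝ) ∈ A := AddSubgroup.subset_closure (by simp)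
    have : (((m : ℝ) + k * α, (n : ℝ) + k * β) : ℝ × ℝ)
        = m • ((1:ℝ), (0:ℝ)) + n • ((0:ℝ), (1:ℝ)) + k • ((α, β) : ℝ × ℝ) := by
      refine Prod.ext ?_ ?_ <;>
        simp only [Prod.smul_fst, Prod.smul_snd, Prod.fst_add, Prod.snd_add] <;>
        simp only [zsmul_eq_mul] <;> push_cast <;> ring
    rw [this]
    exact A.le_topologicalClosure
      (A.add_mem (A.add_mem (A.zsmul_mem h1 m) (A.zsmul_mem h2 n)) (A.zsmul_mem h3 k))
  have hθ : ((α, β) : ℝ × ℝ) ∈ H :=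
    A.le_topologicalClosure (AddSubgroup.subset_closure (by simp))
  have hcl : ∀ x : ℝ × ℝ, (∀ ε > 0, ∃ y ∈ H, dist x y < ε) → x ∈ H := by
    intro x hx
    have : x ∈ closure (H : Set (ℝ × ℝ)) := Metric.mem_closure_iff.mpr hx
    rwa [hHclosed.closure_eq] at this
  suffices htop : ∀ x : ℝ × ℝ, x ∈ H by
    rw [dense_iff_closure_eq]
    have : closure (A : Set (ℝ × ℝ)) = (H : Set (ℝ × ℝ)) :=
      AddSubgroup.topologicalClosure_coe.symm
    rw [this]
    exact Set.eq_univ_of_forall htop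
  -- Case analysis: discrete or not
  by_cases hdisc : ∃ ε > 0, ∀ h ∈ H, ‖h‖ < ε → h = 0
  · -- discrete case: contradiction
    exfalso
    obtain ⟨ε, hε, hiso⟩ := hdisc
    set f : ℕ → ℝ × ℝ := fun j => (Int.fract ((j : ℝ) * α), Int.fract ((j : ℝ) * β)) with hf
    have hfH : ∀ j : ℕ, f j ∈ H := by
      intro j
      have := hmem (j : ℤ) (-⌊(j : ℝ) * α⌋) (-⌊(j : ℝ) * β⌋)
      simpa [hf, Int.fract, Prod.ext_iff, sub_eq_neg_add] using this
    have hfK : ∀ j : ℕ, f j ∈ Metric.closedBall (0 : ℝ × ℝ) 2 := by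
      intro j
      rw [Metric.mem_closedBall, dist_zero_right]
      have h1 := Int.fract_nonneg ((j : ℝ) * α)
      have h2 := (Int.fract_lt_one ((j : ℝ) * α)).le
      have h3 := Int.fract_nonneg ((j : ℝ) * β)
      have h4 := (Int.fract_lt_one ((j : ℝ) * β)).le
      rw [Prod.norm_def]
      simp only [Real.norm_eq_abs, hf]
      rw [_root_.abs_of_nonneg h1, _root_.abs_of_nonneg h3]
      exact max_le (by linarith) (by linarith)
    obtain ⟨t, _, htfin, hcover⟩ :=
      (isCompact_closedBall (0 : ℝ × ℝ) 2).finite_cover_balls (show (0:ℝ) < ε/2 by linarith)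
    have hchoice : ∀ j : ℕ, ∃ p ∈ t, f j ∈ Metric.ball p (ε/2) := by
      intro j
      have := hcover (hfK j)
      simpa using this
    choose c hc1 hc2 using hchoice
    haveI : Finite t := htfin
    obtain ⟨i, j, hij, hcij⟩ :=
      Finite.exists_ne_map_eq_of_infinite (fun j : ℕ => (⟨c j, hc1 j⟩ : t))
    have hcc : c i = c j := by simpa using congrArg Subtype.val hcij
    have hdist : dist (f i) (f j) < ε := by
      calc dist (f i) (f j) ≤ dist (f i) (c i) + dist (c j) (f j) := by
            rw [hcc]; exact dist_triangle _ _ _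
        _ < ε/2 + ε/2 := by
            gcongr
            · exact Metric.mem_ball.mp (hc2 i)
            · exact Metric.mem_ball'.mp (hc2 j)
        _ = ε := by ring
    have hsubmem : f i - f j ∈ H := H.sub_mem (hfH i) (hfH j)
    have h0 : f i - f j = 0 := hiso _ hsubmem (by rwa [← dist_eq_norm])
    have heq : f i = f j := sub_eq_zero.mp h0
    have heq1 : Int.fract ((i : ℝ) * α) = Int.fract ((j : ℝ) * α) := congrArg Prod.fst heq
    have hk : ((i : ℤ) - j : ℤ) ≠ 0 := by
      intro h; apply hij; omega
    have hrel : (((i : ℤ) - j : ℤ) : ℝ) * α + ((0 : ℤ) : ℝ) * β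
        + ((⌊(j : ℝ) * α⌋ - ⌊(i : ℝ) * α⌋ : ℤ) : ℝ) = 0 := by
      have e1 : (i : ℝ) * α - ⌊(i : ℝ) * α⌋ = (j : ℝ) * α - ⌊(j : ℝ) * α⌋ := by
        rw [← Int.self_sub_floor, ← Int.self_sub_floor] at heq1; exact heq1
      push_cast
      linarith
    exact hk ((hstar _ _ _ hrel).1)
  · -- non-discrete: find a line inside H
    push_neg at hdisc
    have hseq : ∀ j : ℕ, ∃ h : ℝ × ℝ, h ∈ H ∧ ‖h‖ < 1/(j+1) ∧ h ≠ 0 := by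
      intro j
      obtain ⟨h, hh1, hh2, hh3⟩ := hdisc (1/(j+1)) (by positivity)
      exact ⟨h, hh1, hh2, hh3⟩
    choose h hh1 hh2 hh3 using hseq
    have hnorm : ∀ j, (0 : ℝ) < ‖h j‖ := fun j => norm_pos_iff.mpr (hh3 j)
    set e' : ℕ → ℝ × ℝ := fun j => ‖h j‖⁻¹ • h j with he'
    have he'sphere : ∀ j, e' j ∈ Metric.sphere (0 : ℝ × ℝ) 1 := by
      intro j
      rw [Metric.mem_sphere, dist_zero_right, he']
      rw [norm_smul, norm_inv, norm_norm, inv_mul_cancel₀ (hnorm j).ne']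
    obtain ⟨e, hesphere, φ, hφmono, hφtend⟩ :=
      (isCompact_sphere (0 : ℝ × ℝ) 1).tendsto_subseq he'sphere
    have hene : e ≠ 0 := by
      intro h0
      rw [h0] at hesphere
      simp at hesphere
    have hline : ∀ s : ℝ, s • e ∈ H := by
      intro s
      set a : ℕ → ℝ := fun j => (⌊s / ‖h (φ j)‖⌋ : ℝ) * ‖h (φ j)‖ with ha
      have hmemj : ∀ j, (⌊s / ‖h (φ j)‖⌋ : ℤ) • h (φ j) ∈ H := fun j => H.zsmul_mem (hh1 _) _
      have hrepr : ∀ j, (⌊s / ‖h (φ j)‖⌋ : ℤ) • h (φ j) = a j • e' (φ j) := by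
        intro j
        rw [ha, he']
        rw [smul_smul, ← Int.cast_smul_eq_zsmul ℝ]
        congr 1
        show (⌊s / ‖h (φ j)‖⌋ : ℝ) = ↑⌊s / ‖h (φ j)‖⌋ * ‖h (φ j)‖ * ‖h (φ j)‖⁻¹
        rw [mul_assoc, mul_inv_cancel₀ (hnorm (φ j)).ne', mul_one]
      have hbound : ∀ j, ‖a j - s‖ ≤ ‖h (φ j)‖ := by
        intro j
        simp only [ha]
        rw [Real.norm_eq_abs, abs_le]
        have h1 : (⌊s / ‖h (φ j)‖⌋ : ℝ) ≤ s / ‖h (φ j)‖ := Int.floor_le _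
        have h2 : s / ‖h (φ j)‖ - 1 ≤ (⌊s / ‖h (φ j)‖⌋ : ℝ) := by
          have := Int.lt_floor_add_one (s / ‖h (φ j)‖); linarith
        have hp := hnorm (φ j)
        constructor
        · have := mul_le_mul_of_nonneg_right h2 hp.le
          rw [sub_mul, div_mul_cancel₀ _ hp.ne'] at this
          linarith
        · have := mul_le_mul_of_nonneg_right h1 hp.le
          rw [div_mul_cancel₀ _ hp.ne'] at this
          linarith
      have hnormtend : Filter.Tendsto (fun j => ‖h (φ j)‖) Filter.atTop (nhds 0) := by
        apply squeeze_zero (fun j => (hnorm (φ j)).le) (fun j => ?_)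
          (tendsto_one_div_add_atTop_nhds_zero_nat)
        calc ‖h (φ j)‖ ≤ 1/(φ j + 1) := (hh2 (φ j)).le
          _ ≤ 1/(j + 1) := by
              apply one_div_le_one_div_of_le (by positivity)
              have : (j : ℝ) ≤ (φ j : ℝ) := by exact_mod_cast hφmono.le_apply
              linarith
      have hdiff : Filter.Tendsto (fun j => a j - s) Filter.atTop (nhds 0) :=
        squeeze_zero_norm hbound hnormtend
      have hatend : Filter.Tendsto a Filter.atTop (nhds s) := by
        have := hdiff.add_const s
        simpa using this
      have hsm : Filter.Tendsto (fun j => a j • e' (φ j)) Filter.atTop (nhds (s • e)) :=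
        hatend.smul hφtend
      exact hHclosed.mem_of_tendsto hsm
        (Filter.Eventually.of_forall (fun j => by rw [← hrepr j]; exact hmemj j))
    by_cases hrel : ∀ k l : ℤ, (k : ℝ) * e.1 + (l : ℝ) * e.2 = 0 → k = 0 ∧ l = 0
    · -- the line has irrational slope, and together with ℤ² it is dense
      have he1 : e.1 ≠ 0 := by
        intro h0
        have := (hrel 1 0 (by simp [h0])).1
        norm_num at this
      have hsirr : Irrational (e.2 / e.1) := by
        rintro ⟨q, hq⟩
        have h2 : e.2 = (q : ℝ) * e.1 := by
          field_simp at hq; linarith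
        have h3 : ((q.den : ℝ)) * (q : ℝ) = (q.num : ℝ) := by
          rw [Rat.cast_def]
          field_simp
        have heq : ((-q.num : ℤ) : ℝ) * e.1 + ((q.den : ℤ) : ℝ) * e.2 = 0 := by
          push_cast
          rw [h2]
          linear_combination e.1 * h3
        have := (hrel _ _ heq).2
        have hd := q.den_nz
        omega
      intro x
      apply hcl
      intro ε hε
      obtain ⟨y, ⟨m, n, rfl⟩, hy⟩ :=
        Metric.mem_closure_iff.mp (dense1D _ hsirr (x.2 - x.1 * (e.2 / e.1))) ε hε
      set t : ℝ := (x.1 + (m : ℝ)) / e.1 with hht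
      have hw : ((((-m : ℤ)) : ℝ), (((n : ℤ)) : ℝ)) ∈ H := by
        simpa using hmem 0 (-m) n
      refine ⟨t • e + ((((-m : ℤ)) : ℝ), (((n : ℤ)) : ℝ)), H.add_mem (hline t) hw, ?_⟩
      rw [Prod.dist_eq]
      have hfst : (t • e + ((((-m : ℤ)) : ℝ), (((n : ℤ)) : ℝ))).1 = x.1 := by
        simp only [Prod.fst_add, Prod.smul_fst, smul_eq_mul, Int.cast_neg]
        rw [hht]
        field_simp
        ring
      have hsnd : (t • e + ((((-m : ℤ)) : ℝ), (((n : ℤ)) : ℝ))).2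
          = (x.1 + (m : ℝ)) * (e.2 / e.1) + (n : ℝ) := by
        simp only [Prod.snd_add, Prod.smul_snd, smul_eq_mul]
        rw [hht]
        field_simp
      rw [hfst, hsnd]
      simp only [dist_self]
      rw [Real.dist_eq] at hy ⊢
      apply max_lt (by linarith)
      rw [show x.2 - ((x.1 + (m : ℝ)) * (e.2 / e.1) + (n : ℝ))
          = x.2 - x.1 * (e.2 / e.1) - ((m : ℝ) * (e.2 / e.1) + (n : ℝ)) by ring] at *
      exact hy
    · -- the line has rational slope
      push_neg at hrel
      obtain ⟨k, l, hkl_eq, hkl_ne⟩ := hrel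
      have hklne : ¬(k = 0 ∧ l = 0) := by
        rintro ⟨rfl, rfl⟩
        exact hkl_ne rfl rfl
      have hg0 : 0 < Int.gcd k l := Nat.pos_of_ne_zero (fun h0 =>
        hklne ⟨(Int.gcd_eq_zero_iff.mp h0).1, (Int.gcd_eq_zero_iff.mp h0).2⟩)
      set k' : ℤ := k / (Int.gcd k l : ℤ) with hk'
      set l' : ℤ := l / (Int.gcd k l : ℤ) with hl'
      have hkk : ((Int.gcd k l : ℤ)) * k' = k := Int.mul_ediv_cancel' (Int.gcd_dvd_left k l)
      have hll : ((Int.gcd k l : ℤ)) * l' = l := Int.mul_ediv_cancel' (Int.gcd_dvd_right k l)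
      have hcop : Int.gcd k' l' = 1 := Int.gcd_div_gcd_div_gcd hg0
      have hk'l'ne : ¬(k' = 0 ∧ l' = 0) := by
        rintro ⟨h1, h2⟩
        rw [h1, mul_zero] at hkk
        rw [h2, mul_zero] at hll
        exact hklne ⟨hkk.symm, hll.symm⟩
      have hrel' : (k' : ℝ) * e.1 + (l' : ℝ) * e.2 = 0 := by
        have hgR : ((Int.gcd k l : ℤ) : ℝ) ≠ 0 := by exact_mod_cast hg0.ne'
        have : ((Int.gcd k l : ℤ) : ℝ) * ((k' : ℝ) * e.1 + (l' : ℝ) * e.2) = 0 := by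
          rw [show ((Int.gcd k l : ℤ) : ℝ) * ((k' : ℝ) * e.1 + (l' : ℝ) * e.2)
            = (((Int.gcd k l : ℤ) * k' : ℤ) : ℝ) * e.1 + (((Int.gcd k l : ℤ) * l' : ℤ) : ℝ) * e.2
            by push_cast; ring, hkk, hll]
          exact hkl_eq
        exact (mul_eq_zero.mp this).resolve_left hgR
      set γ : ℝ := (k' : ℝ) * α + (l' : ℝ) * β with hγ
      have hγirr : Irrational γ := by
        rintro ⟨q, hq⟩
        have h3 : ((q.den : ℝ)) * (q : ℝ) = (q.num : ℝ) := by
          rw [Rat.cast_def]; field_simp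
        have heq : (((q.den : ℤ) * k' : ℤ) : ℝ) * α + (((q.den : ℤ) * l' : ℤ) : ℝ) * β
            + ((-q.num : ℤ) : ℝ) = 0 := by
          push_cast
          rw [hγ] at hq
          nlinarith [h3, hq]
        obtain ⟨ha, hb, -⟩ := hstar _ _ _ heq
        have hd : (q.den : ℤ) ≠ 0 := by exact_mod_cast q.den_nz
        exact hk'l'ne ⟨(mul_eq_zero.mp ha).resolve_left hd, (mul_eq_zero.mp hb).resolve_left hd⟩
      obtain ⟨a, b, hab⟩ : IsCoprime k' l' := Int.isCoprime_iff_gcd_eq_one.mpr hcop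
      have habR : (a : ℝ) * k' + (b : ℝ) * l' = 1 := by exact_mod_cast congrArg (Int.cast : ℤ → ℝ) hab
      set N : ℝ := (k' : ℝ) ^ 2 + (l' : ℝ) ^ 2 with hN
      have hNpos : 0 < N := by
        rw [hN]
        rcases (not_and_or.mp hk'l'ne) with h | h
        · have h' : (k' : ℝ) ≠ 0 := by exact_mod_cast h
          have h2 : 0 < (k' : ℝ) ^ 2 := (sq_nonneg _).lt_of_ne' (pow_ne_zero 2 h')
          nlinarith [sq_nonneg (l' : ℝ)]
        · have h' : (l' : ℝ) ≠ 0 := by exact_mod_cast h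
          have h2 : 0 < (l' : ℝ) ^ 2 := (sq_nonneg _).lt_of_ne' (pow_ne_zero 2 h')
          nlinarith [sq_nonneg (k' : ℝ)]
      set c : ℝ × ℝ := ((k' : ℝ) / N, (l' : ℝ) / N) with hc
      have hker : ∀ y : ℝ × ℝ, (k' : ℝ) * y.1 + (l' : ℝ) * y.2 = 0 → ∃ t : ℝ, y = t • e := by
        intro y hy
        have hcross : y.1 * e.2 - y.2 * e.1 = 0 := by
          by_cases hk'0 : (k' : ℝ) = 0
          · have hl'0 : (l' : ℝ) ≠ 0 := by
              intro h0
              exact hk'l'ne ⟨by exact_mod_cast hk'0, by exact_mod_cast h0⟩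
            have he2 : e.2 = 0 := by
              have h5 : (l' : ℝ) * e.2 = 0 := by rw [hk'0] at hrel'; linarith
              exact (mul_eq_zero.mp h5).resolve_left hl'0
            have hy2 : y.2 = 0 := by
              have h5 : (l' : ℝ) * y.2 = 0 := by rw [hk'0] at hy; linarith
              exact (mul_eq_zero.mp h5).resolve_left hl'0
            rw [he2, hy2]; ring
          · have h6 : (k' : ℝ) * (y.1 * e.2 - y.2 * e.1) = 0 := by
              linear_combination e.2 * hy - y.2 * hrel'
            exact (mul_eq_zero.mp h6).resolve_left hk'0
        by_cases he1 : e.1 = 0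
        · have he2 : e.2 ≠ 0 := by
            intro h0
            exact hene (Prod.ext he1 h0)
          refine ⟨y.2 / e.2, Prod.ext ?_ ?_⟩
          · simp only [Prod.smul_fst, smul_eq_mul, he1, mul_zero]
            rw [he1, mul_zero] at hcross
            have : y.1 * e.2 = 0 := by linarith
            exact (mul_eq_zero.mp this).resolve_right he2
          · simp only [Prod.smul_snd, smul_eq_mul]
            field_simp
        · refine ⟨y.1 / e.1, Prod.ext ?_ ?_⟩
          · simp only [Prod.smul_fst, smul_eq_mul]
            field_simp
          · simp only [Prod.smul_snd, smul_eq_mul]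
            field_simp
            linear_combination -hcross
      intro x
      apply hcl
      intro ε hε
      have hcpos : (0 : ℝ) < ‖c‖ + 1 := by positivity
      set ε' : ℝ := ε / (‖c‖ + 1) with hε'def
      have hε' : 0 < ε' := by positivity
      obtain ⟨y, ⟨j, i, rfl⟩, hy⟩ :=
        Metric.mem_closure_iff.mp (dense1D γ hγirr ((k' : ℝ) * x.1 + (l' : ℝ) * x.2)) ε' hε'
      set δ : ℝ := ((k' : ℝ) * x.1 + (l' : ℝ) * x.2) - ((j : ℝ) * γ + (i : ℝ)) with hδ
      have hδabs : |δ| < ε' := by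
        rw [Real.dist_eq] at hy
        exact hy
      set y0 : ℝ × ℝ := (x.1 - δ * ((k' : ℝ) / N) - (j : ℝ) * α - ((i * a : ℤ) : ℝ),
        x.2 - δ * ((l' : ℝ) / N) - (j : ℝ) * β - ((i * b : ℤ) : ℝ)) with hy0
      have hcomp1 : y0.1 = x.1 - δ * ((k' : ℝ) / N) - (j : ℝ) * α - ((i * a : ℤ) : ℝ) := by
        rw [hy0]
      have hcomp2 : y0.2 = x.2 - δ * ((l' : ℝ) / N) - (j : ℝ) * β - ((i * b : ℤ) : ℝ) := by
        rw [hy0]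
      have hy0ker : (k' : ℝ) * y0.1 + (l' : ℝ) * y0.2 = 0 := by
        have e1 : ((k' : ℝ) ^ 2 + (l' : ℝ) ^ 2) / N = 1 := by
          rw [← hN]; exact div_self hNpos.ne'
        have e2 : (k' : ℝ) * y0.1 + (l' : ℝ) * y0.2
            = ((k' : ℝ) * x.1 + (l' : ℝ) * x.2)
              - δ * (((k' : ℝ) ^ 2 + (l' : ℝ) ^ 2) / N) - (j : ℝ) * γ
              - (i : ℝ) * ((a : ℝ) * (k' : ℝ) + (b : ℝ) * (l' : ℝ)) := by
          rw [hcomp1, hcomp2, hγ]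
          push_cast
          ring
        rw [e2, e1, habR, hδ]
        ring
      obtain ⟨t, ht⟩ := hker y0 hy0ker
      have hy0H : y0 ∈ H := ht ▸ hline t
      have hjθ : (((j : ℝ) * α, (j : ℝ) * β) : ℝ × ℝ) ∈ H := by
        have := H.zsmul_mem hθ j
        have heq : (j • ((α, β) : ℝ × ℝ)) = (((j : ℝ) * α, (j : ℝ) * β) : ℝ × ℝ) := by
          refine Prod.ext ?_ ?_ <;> simp [zsmul_eq_mul]
        rwa [heq] at this
      have hwH : ((((i * a : ℤ)) : ℝ), (((i * b : ℤ)) : ℝ)) ∈ H := by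
        simpa using hmem 0 (i * a) (i * b)
      have hzH : x - δ • c ∈ H := by
        have hzeq : x - δ • c
            = y0 + ((((j : ℝ) * α, (j : ℝ) * β) : ℝ × ℝ)
              + ((((i * a : ℤ)) : ℝ), (((i * b : ℤ)) : ℝ))) := by
          have hcc1 : c.1 = (k' : ℝ) / N := by rw [hc]
          have hcc2 : c.2 = (l' : ℝ) / N := by rw [hc]
          refine Prod.ext ?_ ?_ <;>
            simp only [Prod.fst_add, Prod.snd_add, Prod.fst_sub, Prod.snd_sub,
              Prod.smul_fst, Prod.smul_snd, smul_eq_mul, hcomp1, hcomp2, hcc1, hcc2] <;> ring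
        rw [hzeq]
        exact H.add_mem hy0H (H.add_mem hjθ hwH)
      refine ⟨x - δ • c, hzH, ?_⟩
      rw [dist_eq_norm, show x - (x - δ • c) = δ • c by abel, norm_smul, Real.norm_eq_abs]
      calc |δ| * ‖c‖ ≤ |δ| * (‖c‖ + 1) := by
            apply mul_le_mul_of_nonneg_left (by linarith) (abs_nonneg δ)
        _ < ε' * (‖c‖ + 1) := by
            apply mul_lt_mul_of_pos_right hδabs hcpos
        _ = ε := by
            rw [hε'def]; field_simp

/-- Let u, v ∈ ℂ with Im(u/v) ≠ 0, α, β ∈ ℝ with αu + βv = 1,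
ξ = e^{2πiu}, η = e^{2πiv}. Then {ξ^m η^n : m, n ∈ ℤ} is dense in ℂ iff for all
integers k, l, m, kα + lβ + m = 0 implies k = l = m = 0. -/
theorem dense_multiplicative_group_iff (u v : ℂ) (huv : (u / v).im ≠ 0)
    (α β : ℝ) (h1 : (α : ℂ) * u + (β : ℂ) * v = 1)
    (ξ η : ℂ) (hξ : ξ = Complex.exp (2 * Real.pi * Complex.I * u))
    (hη : η = Complex.exp (2 * Real.pi * Complex.I * v)) :
    Dense {z : ℂ | ∃ m n : ℤ, z = ξ ^ m * η ^ n} ↔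
      (∀ k l m : ℤ, (k : ℝ) * α + (l : ℝ) * β + (m : ℝ) = 0 → k = 0 ∧ l = 0 ∧ m = 0) := by
  have hv0 : v ≠ 0 := by
    rintro rfl
    simp at huv
  set d : ℝ := u.re * v.im - u.im * v.re with hdd
  have hd : d ≠ 0 := by
    intro h0
    apply huv
    rw [Complex.div_im]
    have hns : Complex.normSq v ≠ 0 := by
      simpa using hv0
    field_simp
    rw [hdd] at h0
    linarith
  have h1re : α * u.re + β * v.re = 1 := by
    have := congrArg Complex.re h1
    simpa using this
  have h1im : α * u.im + β * v.im = 0 := by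
    have := congrArg Complex.im h1
    simpa using this
  have hαd : α * d = v.im := by
    rw [hdd]; linear_combination v.im * h1re - v.re * h1im
  have hβd : β * d = -u.im := by
    rw [hdd]; linear_combination -u.im * h1re + u.re * h1im
  have hc2pi : (2 * (Real.pi : ℂ) * Complex.I) ≠ 0 :=
    mul_ne_zero (mul_ne_zero two_ne_zero (Complex.ofReal_ne_zero.mpr Real.pi_ne_zero))
      Complex.I_ne_zero
  set G : Set ℂ := {z : ℂ | ∃ a b c : ℤ, z = a * u + b * v + c} with hG
  have hexp : ∀ a b c : ℤ,
      Complex.exp (2 * Real.pi * Complex.I * ((a : ℂ) * u + (b : ℂ) * v + (c : ℂ)))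
        = ξ ^ a * η ^ b := by
    intro a b c
    rw [hξ, hη, show (2 * (Real.pi : ℂ) * Complex.I * ((a : ℂ) * u + (b : ℂ) * v + (c : ℂ)))
      = (a : ℂ) * (2 * Real.pi * Complex.I * u)
        + ((b : ℂ) * (2 * Real.pi * Complex.I * v) + (c : ℂ) * (2 * Real.pi * Complex.I)) by ring]
    rw [Complex.exp_add, Complex.exp_add, Complex.exp_int_mul, Complex.exp_int_mul,
      Complex.exp_int_mul_two_pi_mul_I]
    ring
  constructor
  · -- dense implies the independence condition
    intro hS k l m hklm
    -- first: density of S transfers to density of the additive group G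
    have hGdense : Dense G := by
      rw [Metric.dense_iff]
      intro w₀ ε hε
      set z₀ : ℂ := Complex.exp (2 * Real.pi * Complex.I * w₀) with hz₀def
      have hz₀ : z₀ ≠ 0 := Complex.exp_ne_zero _
      set L : ℂ → ℂ := fun z => w₀ + (2 * Real.pi * Complex.I)⁻¹ * Complex.log (z / z₀) with hL
      have hLcont : ContinuousAt L z₀ := by
        have hdivcont : ContinuousAt (fun z : ℂ => z / z₀) z₀ := continuousAt_id.div_const z₀
        have hlogcont : ContinuousAt (fun z : ℂ => Complex.log (z / z₀)) z₀ :=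
          hdivcont.clog (by rw [div_self hz₀]; exact one_mem_slitPlane)
        exact continuousAt_const.add (continuousAt_const.mul hlogcont)
      have hLz₀ : L z₀ = w₀ := by
        rw [hL]; simp [div_self hz₀, Complex.log_one]
      obtain ⟨δ₁, hδ₁, hδprop⟩ := Metric.continuousAt_iff.mp hLcont ε hε
      have hnz₀ : 0 < ‖z₀‖ := norm_pos_iff.mpr hz₀
      set δ : ℝ := min δ₁ ‖z₀‖ with hδdef
      have hδpos : 0 < δ := lt_min hδ₁ hnz₀
      obtain ⟨s, hsS, hsdist⟩ := Metric.mem_closure_iff.mp (hS z₀) δ hδpos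
      have hs0 : s ≠ 0 := by
        intro h0
        rw [h0, dist_zero_right] at hsdist
        have := min_le_right δ₁ ‖z₀‖
        rw [hδdef] at hsdist
        linarith
      obtain ⟨mm, nn, rfl⟩ := hsS
      have hfl : Complex.exp (2 * Real.pi * Complex.I * L (ξ ^ mm * η ^ nn)) = ξ ^ mm * η ^ nn := by
        rw [hL]
        simp only
        rw [mul_add, ← mul_assoc, mul_inv_cancel₀ hc2pi, one_mul, Complex.exp_add,
          Complex.exp_log (div_ne_zero hs0 hz₀), ← hz₀def]
        field_simp
      have hws : Complex.exp (2 * Real.pi * Complex.I * ((mm : ℂ) * u + (nn : ℂ) * v))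
          = ξ ^ mm * η ^ nn := by
        have := hexp mm nn 0
        simpa using this
      obtain ⟨j, hj⟩ := Complex.exp_eq_exp_iff_exists_int.mp (hfl.trans hws.symm)
      have hLs : L (ξ ^ mm * η ^ nn) = (mm : ℂ) * u + (nn : ℂ) * v + (j : ℂ) := by
        apply mul_left_cancel₀ hc2pi
        rw [hj]; ring
      refine ⟨L (ξ ^ mm * η ^ nn), Metric.mem_ball.mpr ?_, ⟨mm, nn, j, hLs⟩⟩
      have : dist (ξ ^ mm * η ^ nn) z₀ < δ₁ := by
        rw [dist_comm]
        exact lt_of_lt_of_le hsdist (min_le_left _ _)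
      have := hδprop this
      rwa [hLz₀] at this
    -- the linear functional associated with (k, l)
    by_cases hkl0 : k = 0 ∧ l = 0
    · obtain ⟨rfl, rfl⟩ := hkl0
      refine ⟨rfl, rfl, ?_⟩
      have : (m : ℝ) = 0 := by push_cast at hklm; linarith
      exact_mod_cast this
    · exfalso
      set ψ : ℂ → ℝ := fun z => (k : ℝ) * ((z.re * v.im - z.im * v.re) / d)
        + (l : ℝ) * ((u.re * z.im - u.im * z.re) / d) with hψ
      have hψcont : Continuous ψ := by
        apply Continuous.add
        · exact continuous_const.mul
            (((Complex.continuous_re.mul continuous_const).sub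
              (Complex.continuous_im.mul continuous_const)).div_const _)
        · exact continuous_const.mul
            (((continuous_const.mul Complex.continuous_im).sub
              (continuous_const.mul Complex.continuous_re)).div_const _)
      have hψG : ∀ g ∈ G, ∃ jj : ℤ, ψ g = jj := by
        rintro g ⟨a, b, cc, rfl⟩
        refine ⟨k * a + l * b - cc * m, ?_⟩
        have hre' : ((a : ℂ) * u + (b : ℂ) * v + (cc : ℂ)).re
            = (a : ℝ) * u.re + (b : ℝ) * v.re + (cc : ℝ) := by
          simp
        have him' : ((a : ℂ) * u + (b : ℂ) * v + (cc : ℂ)).im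
            = (a : ℝ) * u.im + (b : ℝ) * v.im := by
          simp
        have hfrac : ψ ((a : ℂ) * u + (b : ℂ) * v + (cc : ℂ))
            = ((k : ℝ) * ((((a : ℂ) * u + (b : ℂ) * v + (cc : ℂ)).re * v.im
                - ((a : ℂ) * u + (b : ℂ) * v + (cc : ℂ)).im * v.re))
              + (l : ℝ) * ((u.re * ((a : ℂ) * u + (b : ℂ) * v + (cc : ℂ)).im
                - u.im * ((a : ℂ) * u + (b : ℂ) * v + (cc : ℂ)).re))) / d := by
          rw [hψ]; ring
        rw [hfrac, hre', him', div_eq_iff hd]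
        push_cast
        linear_combination (-((cc : ℝ) * (k : ℝ))) * hαd + (-((cc : ℝ) * (l : ℝ))) * hβd
          + ((cc : ℝ) * d) * hklm
      -- a point with half-integer value
      obtain ⟨x₀, hx₀⟩ : ∃ x₀ : ℂ, ψ x₀ = 1/2 := by
        rcases not_and_or.mp hkl0 with hk0 | hl0
        · have hkR : (k : ℝ) ≠ 0 := by exact_mod_cast hk0
          refine ⟨((1 / (2 * (k : ℝ)) : ℝ) : ℂ) * u, ?_⟩
          rw [hψ]
          simp only [Complex.mul_re, Complex.mul_im, Complex.ofReal_re, Complex.ofReal_im]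
          field_simp
          ring
        · have hlR : (l : ℝ) ≠ 0 := by exact_mod_cast hl0
          refine ⟨((1 / (2 * (l : ℝ)) : ℝ) : ℂ) * v, ?_⟩
          rw [hψ]
          simp only [Complex.mul_re, Complex.mul_im, Complex.ofReal_re, Complex.ofReal_im]
          field_simp
          ring
      obtain ⟨δ, hδpos, hδ⟩ := Metric.continuous_iff.mp hψcont x₀ (1/4) (by norm_num)
      obtain ⟨g, hgG, hgdist⟩ := Metric.mem_closure_iff.mp (hGdense x₀) δ hδpos
      obtain ⟨jj, hjj⟩ := hψG g hgG
      have hlt := hδ g (by rwa [dist_comm] at hgdist)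
      rw [hjj, hx₀, Real.dist_eq, abs_lt] at hlt
      have h2 : jj ≤ 0 ∨ 1 ≤ jj := by omega
      rcases h2 with h2 | h2
      · have : (jj : ℝ) ≤ 0 := by exact_mod_cast h2
        linarith [hlt.1]
      · have : (1 : ℝ) ≤ (jj : ℝ) := by exact_mod_cast h2
        linarith [hlt.2]
  · -- independence condition implies density
    intro hstar
    have hDdense := kronecker2 α β hstar
    have hGdense : Dense G := by
      rw [Metric.dense_iff]
      intro w ε hε
      set a₀ : ℝ := (w.re * v.im - w.im * v.re) / d with ha₀
      set b₀ : ℝ := (u.re * w.im - u.im * w.re) / d with hb₀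
      have hw : (a₀ : ℂ) * u + (b₀ : ℂ) * v = w := by
        apply Complex.ext
        · simp only [Complex.add_re, Complex.mul_re, Complex.ofReal_re, Complex.ofReal_im,
            ha₀, hb₀]
          field_simp
          ring
        · simp only [Complex.add_im, Complex.mul_im, Complex.ofReal_re, Complex.ofReal_im,
            ha₀, hb₀]
          field_simp
          ring
      have hδ'pos : 0 < ε / (‖u‖ + ‖v‖ + 1) := by positivity
      obtain ⟨p, ⟨kk, mm, nn, rfl⟩, hp⟩ :=
        Metric.mem_closure_iff.mp (hDdense (a₀, b₀)) _ hδ'pos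
      set g : ℂ := (mm : ℂ) * u + (nn : ℂ) * v + (kk : ℂ) with hgdef
      have hg2 : g = (((mm : ℝ) + kk * α : ℝ) : ℂ) * u + (((nn : ℝ) + kk * β : ℝ) : ℂ) * v := by
        rw [hgdef]
        push_cast
        linear_combination (-(kk : ℂ)) * h1
      have hd1 : dist a₀ ((mm : ℝ) + kk * α) < ε / (‖u‖ + ‖v‖ + 1) := by
        refine lt_of_le_of_lt ?_ hp
        rw [Prod.dist_eq]
        exact le_max_left _ _
      have hd2 : dist b₀ ((nn : ℝ) + kk * β) < ε / (‖u‖ + ‖v‖ + 1) := by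
        refine lt_of_le_of_lt ?_ hp
        rw [Prod.dist_eq]
        exact le_max_right _ _
      refine ⟨g, Metric.mem_ball'.mpr ?_, ⟨mm, nn, kk, rfl⟩⟩
      rw [dist_eq_norm, ← hw, hg2]
      have heq2 : (a₀ : ℂ) * u + (b₀ : ℂ) * v
          - ((((mm : ℝ) + kk * α : ℝ) : ℂ) * u + (((nn : ℝ) + kk * β : ℝ) : ℂ) * v)
          = ((a₀ - ((mm : ℝ) + kk * α) : ℝ) : ℂ) * u
            + ((b₀ - ((nn : ℝ) + kk * β) : ℝ) : ℂ) * v := by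
        push_cast
        ring
      rw [heq2]
      calc ‖((a₀ - ((mm : ℝ) + kk * α) : ℝ) : ℂ) * u
            + ((b₀ - ((nn : ℝ) + kk * β) : ℝ) : ℂ) * v‖
          ≤ ‖((a₀ - ((mm : ℝ) + kk * α) : ℝ) : ℂ) * u‖
            + ‖((b₀ - ((nn : ℝ) + kk * β) : ℝ) : ℂ) * v‖ := norm_add_le _ _
        _ = |a₀ - ((mm : ℝ) + kk * α)| * ‖u‖ + |b₀ - ((nn : ℝ) + kk * β)| * ‖v‖ := by
            rw [norm_mul, norm_mul, Complex.norm_real, Complex.norm_real,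
              Real.norm_eq_abs, Real.norm_eq_abs]
        _ ≤ (ε / (‖u‖ + ‖v‖ + 1)) * ‖u‖ + (ε / (‖u‖ + ‖v‖ + 1)) * ‖v‖ := by
            rw [Real.dist_eq] at hd1 hd2
            gcongr <;> first | exact hd1.le | exact hd2.le
        _ < ε := by
            have hlt1 : (‖u‖ + ‖v‖) / (‖u‖ + ‖v‖ + 1) < 1 := by
              rw [div_lt_one (by positivity)]
              linarith
            calc (ε / (‖u‖ + ‖v‖ + 1)) * ‖u‖ + (ε / (‖u‖ + ‖v‖ + 1)) * ‖v‖
                = ε * ((‖u‖ + ‖v‖) / (‖u‖ + ‖v‖ + 1)) := by ring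
              _ < ε * 1 := by exact mul_lt_mul_of_pos_left hlt1 hε
              _ = ε := mul_one ε
    -- density of G gives density of the multiplicative set
    rw [dense_iff_closure_eq]
    have hsub1 : ({(0 : ℂ)}ᶜ : Set ℂ) ⊆ closure {z : ℂ | ∃ m n : ℤ, z = ξ ^ m * η ^ n} := by
      intro z hz
      have hz0 : z ≠ 0 := by simpa using hz
      rw [Metric.mem_closure_iff]
      intro ε hε
      obtain ⟨w', hw'⟩ : ∃ w', Complex.exp w' = z := by
        have : z ∈ Set.range Complex.exp := by rw [Complex.range_exp]; simpa
        exact this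
      set w₀ : ℂ := w' / (2 * Real.pi * Complex.I) with hw₀def
      have hfw₀ : Complex.exp (2 * Real.pi * Complex.I * w₀) = z := by
        rw [hw₀def, mul_comm, div_mul_cancel₀ _ hc2pi, hw']
      have hfcont : ContinuousAt (fun w : ℂ => Complex.exp (2 * Real.pi * Complex.I * w)) w₀ :=
        (Complex.continuous_exp.comp (continuous_const.mul continuous_id)).continuousAt
      obtain ⟨δ, hδpos, hδ⟩ := Metric.continuousAt_iff.mp hfcont ε hε
      obtain ⟨g, ⟨a, b, cc, rfl⟩, hgd⟩ := Metric.mem_closure_iff.mp (hGdense w₀) δ hδpos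
      refine ⟨ξ ^ a * η ^ b, ⟨a, b, rfl⟩, ?_⟩
      have := hδ (by rwa [dist_comm] at hgd)
      rw [hexp a b cc, hfw₀] at this
      rwa [dist_comm] at this
    have h2 : closure ({(0 : ℂ)}ᶜ : Set ℂ)
        ⊆ closure {z : ℂ | ∃ m n : ℤ, z = ξ ^ m * η ^ n} := by
      have := closure_mono hsub1
      rwa [closure_closure] at this
    rw [(dense_compl_singleton (0 : ℂ)).closure_eq] at h2
    exact Set.univ_subset_iff.mp h2
end

section
/- Let ξ, η be nonzero complex numbers. Then the set H(ξ,η) is a closed subgroup of the unit circle {z ∈ ℂ : |z| = 1} (it contains 1, is closed under multiplication and inverses, and is topologically closed), and consequently H(ξ,η) is either a finite set or equals the whole unit circle {z ∈ ℂ : |z| = 1}. -/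
open Filter Topology

/-- For nonzero ξ, η, `Hset ξ η` is the set of z with |z| = 1 for which there
are integer sequences (n_k), (m_k) with ξ^{n_k} · η^{m_k} → 1 and
(ξ/|ξ|)^{n_k} → z. -/
def Hset (ξ η : ℂ) : Set ℂ :=
  {z : ℂ | ‖z‖ = 1 ∧ ∃ n m : ℕ → ℤ,
    Tendsto (fun k => ξ ^ (n k) * η ^ (m k)) atTop (𝓝 1) ∧
    Tendsto (fun k => (ξ / (‖ξ‖ : ℂ)) ^ (n k)) atTop (𝓝 z)}

section HsetAux

open Real

variable {ξ η : ℂ}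

/-- 1 is in Hset. -/
lemma Hset.one_mem : (1 : ℂ) ∈ Hset ξ η := by
  refine ⟨by simp, fun _ => 0, fun _ => 0, ?_, ?_⟩ <;> simp

/-- Hset is a subset of the unit circle. -/
lemma Hset.subset_circle : Hset ξ η ⊆ {z : ℂ | ‖z‖ = 1} :=
  fun _ hz => hz.1

/-- Hset is closed under multiplication. -/
lemma Hset.mul_mem (hξ : ξ ≠ 0) (hη : η ≠ 0) {z w : ℂ}
    (hz : z ∈ Hset ξ η) (hw : w ∈ Hset ξ η) : z * w ∈ Hset ξ η := by
  have hu : (ξ / (‖ξ‖ : ℂ)) ≠ 0 := by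
    apply div_ne_zero hξ
    simpa using hξ
  obtain ⟨hz1, n, m, hz2, hz3⟩ := hz
  obtain ⟨hw1, n', m', hw2, hw3⟩ := hw
  refine ⟨by simp [map_mul, hz1, hw1], fun k => n k + n' k, fun k => m k + m' k, ?_, ?_⟩
  · have := hz2.mul hw2
    rw [mul_one] at this
    convert this using 2 with k
    rw [zpow_add₀ hξ, zpow_add₀ hη]
    ring
  · have := hz3.mul hw3
    convert this using 2 with k
    rw [zpow_add₀ hu]

/-- Hset is closed under inverses. -/
lemma Hset.inv_mem {z : ℂ} (hz : z ∈ Hset ξ η) : z⁻¹ ∈ Hset ξ η := by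
  obtain ⟨hz1, n, m, hz2, hz3⟩ := hz
  have hz0 : z ≠ 0 := by
    intro h; rw [h] at hz1; simp at hz1
  refine ⟨by simp [map_inv₀, hz1], fun k => -(n k), fun k => -(m k), ?_, ?_⟩
  · have := hz2.inv₀ one_ne_zero
    rw [inv_one] at this
    convert this using 2 with k
    rw [zpow_neg, zpow_neg, mul_inv]
  · have := hz3.inv₀ hz0
    convert this using 2 with k
    rw [zpow_neg]

/-- Hset is topologically closed. -/
lemma Hset.isClosed : IsClosed (Hset ξ η) := by
  set u : ℂ := ξ / (‖ξ‖ : ℂ) with hu_def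
  set A : Set (ℂ × ℂ) := Set.range (fun p : ℤ × ℤ => (ξ ^ p.1 * η ^ p.2, u ^ p.1)) with hA
  have hEq : Hset ξ η = {z : ℂ | ‖z‖ = 1} ∩ {z : ℂ | ((1 : ℂ), z) ∈ closure A} := by
    ext z
    constructor
    · rintro ⟨h1, n, m, h2, h3⟩
      refine ⟨h1, mem_closure_of_tendsto (h2.prodMk_nhds h3) ?_⟩
      exact Eventually.of_forall fun k => ⟨(n k, m k), rfl⟩
    · rintro ⟨h1, h2⟩
      obtain ⟨x, hx, hlim⟩ := mem_closure_iff_seq_limit.mp h2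
      choose p hp using hx
      refine ⟨h1, fun k => (p k).1, fun k => (p k).2, ?_, ?_⟩
      · have := (continuous_fst.tendsto _).comp hlim
        convert this using 2 with k
        simp [Function.comp, ← hp k]
      · have := (continuous_snd.tendsto _).comp hlim
        convert this using 2 with k
        simp [Function.comp, ← hp k, hu_def]
  rw [hEq]
  apply IsClosed.inter
  · exact isClosed_eq (continuous_norm) continuous_const
  · exact (isClosed_closure).preimage (continuous_const.prodMk continuous_id)

/-- A closed subgroup of the unit circle (viewed as a set of complex numbers) is
either finite or the whole circle. -/
lemma circle_closed_subgroup_dichotomy (S : Set ℂ)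
    (hsub : S ⊆ {z : ℂ | ‖z‖ = 1})
    (hone : (1 : ℂ) ∈ S)
    (hmul : ∀ z w : ℂ, z ∈ S → w ∈ S → z * w ∈ S)
    (hinv : ∀ z : ℂ, z ∈ S → z⁻¹ ∈ S)
    (hcl : IsClosed S) :
    S.Finite ∨ S = {z : ℂ | ‖z‖ = 1} := by
  -- the pullback subgroup of ℝ
  set G : AddSubgroup ℝ :=
    { carrier := {t : ℝ | ((Circle.exp t : ℂ)) ∈ S}
      zero_mem' := by simpa using hone
      add_mem' := by
        intro x y hx hy
        show ((Circle.exp (x + y) : ℂ)) ∈ S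
        rw [Circle.exp_add, Circle.coe_mul]
        exact hmul _ _ hx hy
      neg_mem' := by
        intro x hx
        show ((Circle.exp (-x) : ℂ)) ∈ S
        rw [Circle.exp_neg, Circle.coe_inv]
        exact hinv _ hx } with hG_def
  have hGmem : ∀ t : ℝ, t ∈ G ↔ ((Circle.exp t : ℂ)) ∈ S := fun t => Iff.rfl
  have hGclosed : IsClosed (G : Set ℝ) := by
    have : (G : Set ℝ) = (fun t : ℝ => ((Circle.exp t : ℂ))) ⁻¹' S := rfl
    rw [this]
    exact hcl.preimage (continuous_subtype_val.comp (map_continuous Circle.exp))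
  -- a point on the circle is exp of its argument
  have hcirc : ∀ z : ℂ, ‖z‖ = 1 → ((Circle.exp (Complex.arg z) : ℂ)) = z := by
    intro z hz
    rw [Circle.coe_exp]
    have := Complex.norm_mul_exp_arg_mul_I z
    rwa [hz, Complex.ofReal_one, one_mul] at this
  rcases AddSubgroup.dense_or_cyclic G with hd | ⟨a, ha⟩
  · -- dense case: S is the whole circle
    right
    refine Set.Subset.antisymm hsub ?_
    intro z hz
    have hzabs : ‖z‖ = 1 := hz
    have hGuniv : (G : Set ℝ) = Set.univ := by
      rw [← hGclosed.closure_eq, hd.closure_eq]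
    have : Complex.arg z ∈ G := by
      rw [← SetLike.mem_coe, hGuniv]; trivial
    have := (hGmem _).mp this
    rwa [hcirc z hzabs] at this
  · -- cyclic case: S is finite
    left
    have h2pi : (2 * π) ∈ G := by
      rw [hGmem]
      simpa [Circle.exp_two_pi] using hone
    rw [ha, AddSubgroup.mem_closure_singleton] at h2pi
    obtain ⟨m, hm⟩ := h2pi
    have hm' : (m : ℝ) * a = 2 * π := by rw [← hm]; simp [zsmul_eq_mul]
    have hm0 : m ≠ 0 := by
      rintro rfl
      simp at hm'
    set p : ℤ := |m| with hp_def
    have hp_pos : 0 < p := abs_pos.mpr hm0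
    have hpa : (p : ℝ) * a = 2 * π ∨ (p : ℝ) * a = -(2 * π) := by
      rcases abs_choice m with h | h
      · left; rw [hp_def, h]; exact hm'
      · right; rw [hp_def, h]; push_cast; rw [neg_mul]; rw [hm']
    have key : ∀ (c : ℤ) (x : ℝ), Circle.exp (x + (c : ℝ) * (2 * π)) = Circle.exp x := by
      intro c x
      rw [Circle.exp_add, Circle.exp_int_mul_two_pi, mul_one]
    apply Set.Finite.subset (((Set.finite_Icc (0 : ℤ) (p - 1))).image
      (fun j : ℤ => ((Circle.exp ((j : ℝ) * a) : ℂ))))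
    intro z hz
    have hzabs : ‖z‖ = 1 := hsub hz
    have htG : Complex.arg z ∈ G := by
      rw [hGmem, hcirc z hzabs]; exact hz
    rw [ha, AddSubgroup.mem_closure_singleton] at htG
    obtain ⟨k, hk⟩ := htG
    have hk' : (k : ℝ) * a = Complex.arg z := by rw [← hk]; simp [zsmul_eq_mul]
    set j : ℤ := k % p with hj_def
    refine ⟨j, ⟨Int.emod_nonneg k hp_pos.ne', ?_⟩, ?_⟩
    · have := Int.emod_lt_of_pos k hp_pos
      omega
    · -- z = exp(j * a)
      have hsplit : (k : ℝ) * a = (j : ℝ) * a + ((k / p : ℤ) : ℝ) * ((p : ℝ) * a) := by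
        have h1 : (p : ℝ) * ((k / p : ℤ) : ℝ) + (j : ℝ) = (k : ℝ) := by
          rw [hj_def]
          exact_mod_cast congrArg (fun n : ℤ => (n : ℝ)) (Int.mul_ediv_add_emod k p)
        rw [← h1]
        ring
      have hexp : Circle.exp ((j : ℝ) * a) = Circle.exp ((k : ℝ) * a) := by
        rcases hpa with h | h
        · rw [hsplit, h, key]
        · rw [hsplit, h]
          have : ((k / p : ℤ) : ℝ) * -(2 * π) = ((-(k / p) : ℤ) : ℝ) * (2 * π) := by
            push_cast; ring
          rw [this, key]
      show ((Circle.exp ((j : ℝ) * a) : ℂ)) = z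
      rw [hexp, hk', hcirc z hzabs]

end HsetAux

/-- For nonzero ξ, η, the set H(ξ,η) is a closed subgroup of the
unit circle, and consequently it is either finite or equals the whole unit circle. -/
theorem Hset_closed_subgroup_and_dichotomy (ξ η : ℂ) (hξ : ξ ≠ 0) (hη : η ≠ 0) :
    (Hset ξ η ⊆ {z : ℂ | ‖z‖ = 1}) ∧
    (1 : ℂ) ∈ Hset ξ η ∧
    (∀ z w : ℂ, z ∈ Hset ξ η → w ∈ Hset ξ η → z * w ∈ Hset ξ η) ∧
    (∀ z : ℂ, z ∈ Hset ξ η → z⁻¹ ∈ Hset ξ η) ∧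
    IsClosed (Hset ξ η) ∧
    ((Hset ξ η).Finite ∨ Hset ξ η = {z : ℂ | ‖z‖ = 1}) := by
  refine ⟨Hset.subset_circle, Hset.one_mem, fun z w hz hw => Hset.mul_mem hξ hη hz hw,
    fun z hz => Hset.inv_mem hz, Hset.isClosed, ?_⟩
  exact circle_closed_subgroup_dichotomy (Hset ξ η) Hset.subset_circle Hset.one_mem
    (fun z w hz hw => Hset.mul_mem hξ hη hz hw) (fun z hz => Hset.inv_mem hz) Hset.isClosed
end

section
/- Let ξ, η be nonzero complex numbers. Then H(ξ,η) equals the whole unit circle {z ∈ ℂ : |z| = 1} if and only if there exists an irrational real number α with e^{2πiα} ∈ H(ξ,η). -/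
open Filter Topology

private lemma hset_zpow {ξ η : ℂ} {z : ℂ}
    (hz : z ∈ Hset ξ η) (c : ℤ) : z ^ c ∈ Hset ξ η := by
  obtain ⟨hz1, n, m, h1, h2⟩ := hz
  have hz0 : z ≠ 0 := by
    intro h; rw [h] at hz1; simp at hz1
  have hc1 : ContinuousAt (fun x : ℂ => x ^ c) 1 := continuousAt_zpow₀ _ _ (Or.inl one_ne_zero)
  have hcz : ContinuousAt (fun x : ℂ => x ^ c) z := continuousAt_zpow₀ _ _ (Or.inl hz0)
  refine ⟨by rw [norm_zpow, hz1, one_zpow], fun k => n k * c, fun k => m k * c, ?_, ?_⟩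
  · have heq : (fun k => ξ ^ (n k * c) * η ^ (m k * c))
        = (fun x : ℂ => x ^ c) ∘ (fun k => ξ ^ n k * η ^ m k) := by
      funext k
      simp [Function.comp, zpow_mul, mul_zpow]
    rw [heq]
    simpa using hc1.tendsto.comp h1
  · have heq : (fun k => (ξ / (‖ξ‖ : ℂ)) ^ (n k * c))
        = (fun x : ℂ => x ^ c) ∘ (fun k => (ξ / (‖ξ‖ : ℂ)) ^ n k) := by
      funext k
      simp [Function.comp, zpow_mul]
    rw [heq]
    exact hcz.tendsto.comp h2

private lemma hset_limit {ξ η : ℂ} {w : ℕ → ℂ} {z : ℂ}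
    (hw : ∀ j, w j ∈ Hset ξ η) (hlim : Tendsto w atTop (𝓝 z))
    (hz : ‖z‖ = 1) : z ∈ Hset ξ η := by
  have key : ∀ j : ℕ, ∃ N M : ℤ,
      dist (ξ ^ N * η ^ M) 1 < 1 / (j + 1) ∧
      dist ((ξ / (‖ξ‖ : ℂ)) ^ N) (w j) < 1 / (j + 1) := by
    intro j
    obtain ⟨-, n, m, h1, h2⟩ := hw j
    have hpos : (0 : ℝ) < 1 / (j + 1) := by positivity
    obtain ⟨K1, hK1⟩ := Metric.tendsto_atTop.1 h1 _ hpos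
    obtain ⟨K2, hK2⟩ := Metric.tendsto_atTop.1 h2 _ hpos
    exact ⟨n (max K1 K2), m (max K1 K2), hK1 _ (le_max_left _ _), hK2 _ (le_max_right _ _)⟩
  choose N M hN hM using key
  have hb : Tendsto (fun j : ℕ => 1 / (j + 1 : ℝ)) atTop (𝓝 0) :=
    tendsto_one_div_add_atTop_nhds_zero_nat
  refine ⟨hz, N, M, ?_, ?_⟩
  · exact tendsto_iff_dist_tendsto_zero.2
      (squeeze_zero (fun j => dist_nonneg) (fun j => (hN j).le) hb)
  · refine tendsto_iff_dist_tendsto_zero.2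
      (squeeze_zero (g := fun j : ℕ => 1 / (j + 1 : ℝ) + dist (w j) z)
        (fun j => dist_nonneg) (fun j => ?_) ?_)
    · exact dist_triangle _ (w j) z |>.trans (add_le_add_left (hM j).le _)
    · simpa using hb.add (tendsto_iff_dist_tendsto_zero.1 hlim)

private lemma dense_linComb {α : ℝ} (hα : Irrational α) :
    Dense {x : ℝ | ∃ n m : ℤ, x = n * α + m} := by
  set S : AddSubgroup ℝ :=
    { carrier := {x : ℝ | ∃ n m : ℤ, x = n * α + m}
      zero_mem' := ⟨0, 0, by simp⟩
      add_mem' := by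
        rintro a b ⟨n1, m1, rfl⟩ ⟨n2, m2, rfl⟩
        exact ⟨n1 + n2, m1 + m2, by push_cast; ring⟩
      neg_mem' := by
        rintro a ⟨n1, m1, rfl⟩
        exact ⟨-n1, -m1, by push_cast; ring⟩ } with hS
  rcases S.dense_or_cyclic with h | ⟨a, ha⟩
  · exact h
  · exfalso
    have hαS : α ∈ S := ⟨1, 0, by simp⟩
    have h1S : (1 : ℝ) ∈ S := ⟨0, 1, by simp⟩
    rw [ha, AddSubgroup.mem_closure_singleton] at hαS h1S
    obtain ⟨n, hn⟩ := hαS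
    obtain ⟨m, hm⟩ := h1S
    rw [zsmul_eq_mul] at hn hm
    have hm0 : (m : ℝ) ≠ 0 := by
      intro h
      rw [h, zero_mul] at hm
      exact one_ne_zero hm.symm
    refine hα ⟨(n : ℚ) / (m : ℚ), ?_⟩
    push_cast
    rw [div_eq_iff hm0, ← hn]
    calc (n : ℝ) = ↑n * (↑m * a) := by rw [hm, mul_one]
      _ = ↑n * a * ↑m := by ring

/-- For nonzero ξ, η, H(ξ,η) equals the whole unit circle iff
there exists an irrational real α with e^{2πiα} ∈ H(ξ,η). -/
theorem Hset_eq_circle_iff_irrational (ξ η : ℂ) (hξ : ξ ≠ 0) (hη : η ≠ 0) :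
    Hset ξ η = {z : ℂ | ‖z‖ = 1} ↔
      ∃ α : ℝ, Irrational α ∧ Complex.exp (2 * Real.pi * Complex.I * α) ∈ Hset ξ η := by
  constructor
  · intro h
    refine ⟨Real.sqrt 2, irrational_sqrt_two, ?_⟩
    rw [h]
    show ‖_‖ = 1
    rw [show (2 * (Real.pi : ℂ) * Complex.I * (Real.sqrt 2 : ℝ))
        = ((2 * Real.pi * Real.sqrt 2 : ℝ) : ℂ) * Complex.I by push_cast; ring]
    rw [Complex.norm_exp]
    simp
  · rintro ⟨α, hα, hz₀⟩
    ext z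
    simp only [Set.mem_setOf_eq]
    constructor
    · exact fun h => h.1
    · intro hz
      set t : ℝ := Complex.arg z / (2 * Real.pi) with ht_def
      have hπ0 : (Real.pi : ℂ) ≠ 0 := by exact_mod_cast Real.pi_ne_zero
      have hzt : Complex.exp (2 * Real.pi * Complex.I * (t : ℝ)) = z := by
        have harg : (2 * (Real.pi : ℂ) * Complex.I * ((t : ℝ) : ℂ))
            = (Complex.arg z : ℂ) * Complex.I := by
          rw [ht_def]
          push_cast
          field_simp
        rw [harg]
        conv_rhs => rw [← Complex.norm_mul_exp_arg_mul_I z]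
        rw [hz, Complex.ofReal_one, one_mul]
      have ht : t ∈ closure {x : ℝ | ∃ n m : ℤ, x = n * α + m} := dense_linComb hα t
      rw [mem_closure_iff_seq_limit] at ht
      obtain ⟨s, hs, hst⟩ := ht
      choose p q hpq using hs
      set z₀ : ℂ := Complex.exp (2 * Real.pi * Complex.I * α) with hz₀_def
      have hw : ∀ j, z₀ ^ (p j) ∈ Hset ξ η := fun j => hset_zpow hz₀ (p j)
      have hlim : Tendsto (fun j => z₀ ^ (p j)) atTop (𝓝 z) := by
        have hc : Continuous (fun x : ℝ => Complex.exp (2 * Real.pi * Complex.I * (x : ℝ))) := by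
          continuity
        have h2 := (hc.tendsto t).comp hst
        rw [hzt] at h2
        have heq : ∀ j, Complex.exp (2 * Real.pi * Complex.I * ((s j : ℝ) : ℂ)) = z₀ ^ (p j) := by
          intro j
          rw [hpq j]
          push_cast
          rw [show (2 * (Real.pi : ℂ) * Complex.I) * ((p j : ℂ) * (α : ℂ) + (q j : ℂ))
              = (p j : ℂ) * (2 * (Real.pi : ℂ) * Complex.I * (α : ℂ))
                + (q j : ℂ) * (2 * (Real.pi : ℂ) * Complex.I) by ring]
          rw [Complex.exp_add, Complex.exp_int_mul, Complex.exp_int_mul,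
            Complex.exp_two_pi_mul_I, one_zpow, mul_one, hz₀_def]
        refine h2.congr fun j => ?_
        simpa [Function.comp] using heq j
      exact hset_limit hw hlim hz
end

section
/- Let u, v ∈ ℂ and set ξ = e^{2πiu}, η = e^{2πiv}. Suppose there exist an irrational real number α and integer sequences (r_k), (s_k), (t_k), (p_k) such that r_k·u + s_k·v − t_k → 0 and r_k·Re(u) − p_k → α as k → ∞. Then H(ξ,η) equals the whole unit circle {z ∈ ℂ : |z| = 1}. -/
open Filter Topology

lemma dense_zmul_add_aux (α : ℝ) (hα : Irrational α) :
    Dense ((AddSubgroup.zmultiples α ⊔ AddSubgroup.zmultiples (1:ℝ) : AddSubgroup ℝ) : Set ℝ) := by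
  rcases (AddSubgroup.zmultiples α ⊔ AddSubgroup.zmultiples (1:ℝ)).dense_or_cyclic with h | ⟨g, hg⟩
  · exact h
  · exfalso
    rw [← AddSubgroup.zmultiples_eq_closure] at hg
    have hαm : α ∈ AddSubgroup.zmultiples g := by
      rw [← hg]; exact SetLike.le_def.mp le_sup_left (AddSubgroup.mem_zmultiples α)
    have h1m : (1:ℝ) ∈ AddSubgroup.zmultiples g := by
      rw [← hg]; exact SetLike.le_def.mp le_sup_right (AddSubgroup.mem_zmultiples (1:ℝ))
    obtain ⟨k, hk⟩ := AddSubgroup.mem_zmultiples_iff.mp hαm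
    obtain ⟨l, hl⟩ := AddSubgroup.mem_zmultiples_iff.mp h1m
    rw [zsmul_eq_mul] at hk hl
    have hl0 : (l:ℝ) ≠ 0 := by
      intro h; rw [h, zero_mul] at hl; exact one_ne_zero hl.symm
    apply hα
    refine ⟨(k : ℚ) / (l : ℚ), ?_⟩
    push_cast
    rw [div_eq_iff hl0, ← hk]
    rw [mul_assoc, mul_comm g (l:ℝ), hl, mul_one]

lemma quot_abs_eq_exp (u ξ : ℂ) (hξ : ξ = Complex.exp (2 * Real.pi * Complex.I * u)) :
    ξ / (‖ξ‖ : ℂ) = Complex.exp (2 * Real.pi * Complex.I * (u.re : ℂ)) := by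
  rw [hξ, Complex.norm_exp, Complex.ofReal_exp, ← Complex.exp_sub]
  congr 1
  apply Complex.ext <;> simp

lemma keyA (u v ξ η : ℂ) (hξ : ξ = Complex.exp (2 * Real.pi * Complex.I * u))
    (hη : η = Complex.exp (2 * Real.pi * Complex.I * v)) (a rr ss tt : ℤ) :
    Complex.exp (2 * Real.pi * Complex.I * ((a:ℂ) * ((rr:ℂ)*u + (ss:ℂ)*v - (tt:ℂ))))
      = ξ ^ (a*rr) * η ^ (a*ss) := by
  rw [hξ, hη, ← Complex.exp_int_mul, ← Complex.exp_int_mul, ← Complex.exp_add]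
  have h : (2 * (Real.pi:ℂ) * Complex.I * ((a:ℂ) * ((rr:ℂ)*u + (ss:ℂ)*v - (tt:ℂ))))
      = (((a*rr:ℤ)):ℂ) * (2 * Real.pi * Complex.I * u)
        + (((a*ss:ℤ)):ℂ) * (2 * Real.pi * Complex.I * v)
        + ((-(a*tt):ℤ):ℂ) * (2 * Real.pi * Complex.I) := by push_cast; ring
  rw [h, Complex.exp_add, Complex.exp_int_mul_two_pi_mul_I, mul_one]

lemma keyC (u ξ : ℂ) (hξ : ξ = Complex.exp (2 * Real.pi * Complex.I * u)) (a rr pp : ℤ) :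
    Complex.exp (2 * Real.pi * Complex.I * ((((a:ℝ) * ((rr:ℝ)*u.re - (pp:ℝ)) : ℝ)):ℂ))
      = (ξ / (‖ξ‖ : ℂ)) ^ (a*rr) := by
  rw [quot_abs_eq_exp u ξ hξ, ← Complex.exp_int_mul]
  have h : (2 * (Real.pi:ℂ) * Complex.I * ((((a:ℝ) * ((rr:ℝ)*u.re - (pp:ℝ)) : ℝ)):ℂ))
      = (((a*rr:ℤ)):ℂ) * (2 * Real.pi * Complex.I * (u.re:ℂ))
        + ((-(a*pp):ℤ):ℂ) * (2 * Real.pi * Complex.I) := by push_cast; ring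
  rw [h, Complex.exp_add, Complex.exp_int_mul_two_pi_mul_I, mul_one]

lemma exp_arg_div (z : ℂ) (hz : ‖z‖ = 1) :
    Complex.exp (2 * Real.pi * Complex.I * (((z.arg / (2*Real.pi) : ℝ)):ℂ)) = z := by
  have h : 2 * (Real.pi:ℂ) * Complex.I * (((z.arg / (2*Real.pi) : ℝ)):ℂ)
      = z.arg * Complex.I := by
    have : (Real.pi : ℂ) ≠ 0 := Complex.ofReal_ne_zero.mpr Real.pi_ne_zero
    push_cast
    field_simp
  rw [h]
  have h2 := Complex.norm_mul_exp_arg_mul_I z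
  rwa [hz, Complex.ofReal_one, one_mul] at h2

/-- Let ξ = e^{2πiu}, η = e^{2πiv}. If there exist an irrational
real α and integer sequences (r_k), (s_k), (t_k), (p_k) with
r_k·u + s_k·v − t_k → 0 and r_k·Re(u) − p_k → α, then H(ξ,η) is the whole unit
circle. -/
theorem Hset_eq_circle_of_sequences (u v : ℂ) (ξ η : ℂ)
    (hξ : ξ = Complex.exp (2 * Real.pi * Complex.I * u))
    (hη : η = Complex.exp (2 * Real.pi * Complex.I * v))
    (α : ℝ) (hα : Irrational α) (r s t p : ℕ → ℤ)
    (h1 : Tendsto (fun k => (r k : ℂ) * u + (s k : ℂ) * v - (t k : ℂ)) atTop (𝓝 0))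
    (h2 : Tendsto (fun k => (r k : ℝ) * u.re - (p k : ℝ)) atTop (𝓝 α)) :
    Hset ξ η = {z : ℂ | ‖z‖ = 1} := by
  ext z
  simp only [Hset, Set.mem_setOf_eq]
  constructor
  · rintro ⟨h, -⟩; exact h
  intro hz
  refine ⟨hz, ?_⟩
  -- the map E : ℝ → ℂ
  set E : ℝ → ℂ := fun x => Complex.exp (2 * Real.pi * Complex.I * (x:ℂ)) with hE
  have hEcont : Continuous E :=
    Complex.continuous_exp.comp (continuous_const.mul Complex.continuous_ofReal)
  -- density: for every ε > 0 there is a : ℤ with dist (E (a*α)) z < ε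
  have hdense : ∀ ε : ℝ, 0 < ε → ∃ a : ℤ, dist (E ((a:ℝ) * α)) z < ε := by
    intro ε hε
    set β : ℝ := z.arg / (2*Real.pi) with hβ
    obtain ⟨δ, hδ, hd⟩ := Metric.continuous_iff.mp hEcont β ε hε
    obtain ⟨x, hxball, hxS⟩ := Metric.dense_iff.mp (dense_zmul_add_aux α hα) β δ hδ
    obtain ⟨y, hy, w, hw, hyw⟩ := AddSubgroup.mem_sup.mp hxS
    obtain ⟨k, hk⟩ := AddSubgroup.mem_zmultiples_iff.mp hy
    obtain ⟨l, hl⟩ := AddSubgroup.mem_zmultiples_iff.mp hw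
    rw [zsmul_eq_mul] at hk
    rw [zsmul_eq_mul, mul_one] at hl
    refine ⟨k, ?_⟩
    have hEx : E ((k:ℝ) * α) = E x := by
      rw [← hyw, ← hk, ← hl, hE]
      simp only
      rw [show (2 * (Real.pi:ℂ) * Complex.I * ((((k:ℝ)*α + (l:ℝ) : ℝ)):ℂ))
          = 2 * Real.pi * Complex.I * ((((k:ℝ)*α : ℝ)):ℂ) + (l:ℂ) * (2 * Real.pi * Complex.I)
          from by push_cast; ring,
        Complex.exp_add, Complex.exp_int_mul_two_pi_mul_I, mul_one]
    rw [hEx]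
    have := hd x (Metric.mem_ball.mp hxball)
    rwa [show E β = z from exp_arg_div z hz] at this
  -- choose a_j with dist (E (a_j α)) z < 1/(j+1)
  have hchoice : ∀ j : ℕ, ∃ a : ℤ, dist (E ((a:ℝ) * α)) z < 1/((j:ℝ)+1) :=
    fun j => hdense _ (by positivity)
  choose a ha using hchoice
  -- for each j, find k with both distances small
  have hfind : ∀ j : ℕ, ∃ k : ℕ,
      dist (ξ ^ (a j * r k) * η ^ (a j * s k)) 1 < 1/((j:ℝ)+1) ∧
      dist ((ξ / (‖ξ‖ : ℂ)) ^ (a j * r k)) (E ((a j : ℝ) * α)) < 1/((j:ℝ)+1) := by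
    intro j
    have hjpos : (0:ℝ) < 1/((j:ℝ)+1) := by positivity
    -- first tendsto
    have t1 : Tendsto (fun kk => ξ ^ (a j * r kk) * η ^ (a j * s kk)) atTop (𝓝 1) := by
      have base : Tendsto (fun kk =>
          Complex.exp (2 * Real.pi * Complex.I *
            ((a j : ℂ) * ((r kk : ℂ) * u + (s kk : ℂ) * v - (t kk : ℂ))))) atTop
          (𝓝 (Complex.exp (2 * Real.pi * Complex.I * ((a j : ℂ) * 0)))) := by
        exact (Complex.continuous_exp.tendsto _).comp
          (((h1.const_mul (a j : ℂ)).const_mul (2 * Real.pi * Complex.I)))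
      simp only [mul_zero, Complex.exp_zero] at base
      have heq : (fun kk => Complex.exp (2 * Real.pi * Complex.I *
            ((a j : ℂ) * ((r kk : ℂ) * u + (s kk : ℂ) * v - (t kk : ℂ)))))
          = fun kk => ξ ^ (a j * r kk) * η ^ (a j * s kk) := by
        funext kk
        exact keyA u v ξ η hξ hη (a j) (r kk) (s kk) (t kk)
      rwa [heq] at base
    -- second tendsto
    have t2 : Tendsto (fun kk => (ξ / (‖ξ‖ : ℂ)) ^ (a j * r kk)) atTop
        (𝓝 (E ((a j : ℝ) * α))) := by
      have hr : Tendsto (fun kk => (a j : ℝ) * ((r kk : ℝ) * u.re - (p kk : ℝ))) atTop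
          (𝓝 ((a j : ℝ) * α)) := h2.const_mul (a j : ℝ)
      have base : Tendsto (fun kk => E ((a j : ℝ) * ((r kk : ℝ) * u.re - (p kk : ℝ)))) atTop
          (𝓝 (E ((a j : ℝ) * α))) := (hEcont.tendsto _).comp hr
      have heq : (fun kk => E ((a j : ℝ) * ((r kk : ℝ) * u.re - (p kk : ℝ))))
          = fun kk => (ξ / (‖ξ‖ : ℂ)) ^ (a j * r kk) := by
        funext kk
        exact keyC u ξ hξ (a j) (r kk) (p kk)
      rwa [heq] at base
    have e1 := Metric.tendsto_nhds.mp t1 _ hjpos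
    have e2 := Metric.tendsto_nhds.mp t2 _ hjpos
    exact (e1.and e2).exists
  choose k hk1 hk2 using hfind
  refine ⟨fun j => a j * r (k j), fun j => a j * s (k j), ?_, ?_⟩
  · rw [tendsto_iff_dist_tendsto_zero]
    exact squeeze_zero (fun j => dist_nonneg) (fun j => (hk1 j).le)
      tendsto_one_div_add_atTop_nhds_zero_nat
  · rw [tendsto_iff_dist_tendsto_zero]
    have hbound : ∀ j : ℕ,
        dist ((ξ / (‖ξ‖ : ℂ)) ^ (a j * r (k j))) z
          ≤ 1/((j:ℝ)+1) + 1/((j:ℝ)+1) := fun j =>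
      (dist_triangle _ (E ((a j : ℝ) * α)) z).trans
        (add_le_add (hk2 j).le (ha j).le)
    have hlim : Tendsto (fun j : ℕ => 1/((j:ℝ)+1) + 1/((j:ℝ)+1)) atTop (𝓝 0) := by
      have := (tendsto_one_div_add_atTop_nhds_zero_nat (𝕜 := ℝ)).add
        (tendsto_one_div_add_atTop_nhds_zero_nat (𝕜 := ℝ))
      simpa using this
    exact squeeze_zero (fun j => dist_nonneg) hbound hlim
end

section
/- Let ξ, η be nonzero complex numbers such that {ξ^m · η^n : m, n ∈ ℤ} is dense in ℂ and H(ξ,η) equals the whole unit circle. Then for every nonempty open set V ⊆ ℂ, every complex number w with |w| = 1, and every ε > 0, there exist integers m, n with ξ^m · η^n ∈ V and |(ξ/|ξ|)^m − w| < ε. -/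
open Filter Topology

/-- If {ξ^m η^n} is dense in ℂ and H(ξ,η) is the whole unit
circle, then for every nonempty open V ⊆ ℂ, every w with |w| = 1 and every ε > 0
there are integers m, n with ξ^m η^n ∈ V and |(ξ/|ξ|)^m − w| < ε. -/
theorem arg_dense_in_open_sets (ξ η : ℂ) (hξ : ξ ≠ 0) (hη : η ≠ 0)
    (hdense : Dense {z : ℂ | ∃ m n : ℤ, z = ξ ^ m * η ^ n})
    (hH : Hset ξ η = {z : ℂ | ‖z‖ = 1})
    (V : Set ℂ) (hV : IsOpen V) (hVne : V.Nonempty)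
    (w : ℂ) (hw : ‖w‖ = 1) (ε : ℝ) (hε : 0 < ε) :
    ∃ m n : ℤ, ξ ^ m * η ^ n ∈ V ∧
      ‖(ξ / (‖ξ‖ : ℂ)) ^ m - w‖ < ε := by
  have hu0 : (ξ / (‖ξ‖ : ℂ)) ≠ 0 := by
    apply div_ne_zero hξ
    simpa using norm_ne_zero_iff.mpr hξ
  -- pick a point of the dense set in V
  obtain ⟨x, hxS, hxV⟩ := hdense.exists_mem_open hV hVne
  obtain ⟨m₀, n₀, rfl⟩ := hxS
  set u := (ξ / (‖ξ‖ : ℂ)) ^ m₀ with hu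
  have huabs : ‖u‖ = 1 := by
    rw [hu, norm_zpow, norm_div, Complex.norm_of_nonneg (norm_nonneg ξ),
      div_self (norm_ne_zero_iff.mpr hξ), one_zpow]
  have hune : u ≠ 0 := zpow_ne_zero _ hu0
  -- w / u is on the unit circle, hence in Hset
  have hz : w / u ∈ Hset ξ η := by
    rw [hH]
    simp [Set.mem_setOf_eq, map_div₀, huabs, hw]
  obtain ⟨-, nseq, mseq, h1, h2⟩ := hz
  have hc : Tendsto (fun k => ξ ^ (m₀ + nseq k) * η ^ (n₀ + mseq k)) atTop
      (𝓝 (ξ ^ m₀ * η ^ n₀)) := by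
    have := h1.const_mul (ξ ^ m₀ * η ^ n₀)
    simp only [mul_one] at this
    convert this using 2 with k
    rw [zpow_add₀ hξ, zpow_add₀ hη]
    ring
  have hc2 : Tendsto (fun k => (ξ / (‖ξ‖ : ℂ)) ^ (m₀ + nseq k)) atTop
      (𝓝 w) := by
    have := h2.const_mul u
    rw [mul_div_cancel₀ _ hune] at this
    convert this using 2 with k
    rw [zpow_add₀ hu0]
  have ev1 := hc.eventually (hV.mem_nhds hxV)
  have ev2 := hc2.eventually (Metric.ball_mem_nhds w hε)
  obtain ⟨k, hk1, hk2⟩ := (ev1.and ev2).exists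
  refine ⟨m₀ + nseq k, n₀ + mseq k, hk1, ?_⟩
  rwa [Complex.dist_eq] at hk2
end

section
/- Let ξ, η be nonzero complex numbers such that {ξ^m · η^n : m, n ∈ ℤ} is dense in ℂ and H(ξ,η) equals the whole unit circle. Then for any nonzero complex numbers z₁, z₂ there exist integer sequences (n_k), (m_k) such that (z₁ · ξ^{n_k})/(z₂ · η^{m_k}) → 1, (ξ/|ξ|)^{n_k} → conj(z₁)/|z₁|, and (η/|η|)^{m_k} → conj(z₂)/|z₂| as k → ∞. -/
open Filter Topology

lemma unit_prod_eq (ξ η : ℂ) (n m : ℤ) :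
    (ξ/(‖ξ‖:ℂ))^n * (η/(‖η‖:ℂ))^m
      = (ξ^n*η^m) / ((‖ξ^n*η^m‖ : ℝ) : ℂ) := by
  rw [norm_mul, norm_zpow, norm_zpow, div_zpow, div_zpow, div_mul_div_comm,
    Complex.ofReal_mul, Complex.ofReal_zpow, Complex.ofReal_zpow]

lemma tendsto_div_abs {f : ℕ → ℂ} {w : ℂ} (hw : w ≠ 0) (hf : Tendsto f atTop (𝓝 w)) :
    Tendsto (fun k => f k / ((‖f k‖ : ℝ):ℂ)) atTop (𝓝 (w / (‖w‖ : ℂ))) := by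
  have h2 : Tendsto (fun k => ((‖f k‖ : ℝ):ℂ)) atTop (𝓝 ((‖w‖ : ℝ):ℂ)) :=
    ((Complex.continuous_ofReal.comp continuous_norm).tendsto w).comp hf
  exact hf.div h2 (by simp [hw])

lemma key_ident (z₁ z₂ : ℂ) (hz₁ : z₁ ≠ 0) (hz₂ : z₂ ≠ 0) :
    (starRingEnd ℂ) z₁ / (‖z₁‖ : ℂ)
      = ((z₂/z₁) / ((‖z₂/z₁‖ : ℝ):ℂ)) * ((starRingEnd ℂ) z₂ / (‖z₂‖ : ℂ)) := by
  have h1 : z₁ * (starRingEnd ℂ) z₁ = (‖z₁‖:ℂ)^2 := by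
    rw [Complex.mul_conj, Complex.normSq_eq_norm_sq]; push_cast; ring
  have h2 : z₂ * (starRingEnd ℂ) z₂ = (‖z₂‖:ℂ)^2 := by
    rw [Complex.mul_conj, Complex.normSq_eq_norm_sq]; push_cast; ring
  have ha₁ : (‖z₁‖ : ℂ) ≠ 0 := by simpa using hz₁
  have ha₂ : (‖z₂‖ : ℂ) ≠ 0 := by simpa using hz₂
  rw [norm_div]
  push_cast
  field_simp
  linear_combination ((‖z₂‖:ℂ))^2 * h1 - ((‖z₁‖:ℂ))^2 * h2

/-- If {ξ^m η^n} is dense in ℂ and H(ξ,η) is the whole unit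
circle, then for any nonzero z₁, z₂ there are integer sequences (n_k), (m_k) with
(z₁ ξ^{n_k})/(z₂ η^{m_k}) → 1, (ξ/|ξ|)^{n_k} → conj(z₁)/|z₁| and
(η/|η|)^{m_k} → conj(z₂)/|z₂|. -/
theorem simultaneous_approach (ξ η : ℂ) (hξ : ξ ≠ 0) (hη : η ≠ 0)
    (hdense : Dense {z : ℂ | ∃ m n : ℤ, z = ξ ^ m * η ^ n})
    (hH : Hset ξ η = {z : ℂ | ‖z‖ = 1})
    (z₁ z₂ : ℂ) (hz₁ : z₁ ≠ 0) (hz₂ : z₂ ≠ 0) :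
    ∃ n m : ℕ → ℤ,
      Tendsto (fun k => (z₁ * ξ ^ (n k)) / (z₂ * η ^ (m k))) atTop (𝓝 1) ∧
      Tendsto (fun k => (ξ / (‖ξ‖ : ℂ)) ^ (n k)) atTop
        (𝓝 ((starRingEnd ℂ) z₁ / (‖z₁‖ : ℂ))) ∧
      Tendsto (fun k => (η / (‖η‖ : ℂ)) ^ (m k)) atTop
        (𝓝 ((starRingEnd ℂ) z₂ / (‖z₂‖ : ℂ))) := by
  have hw : (z₂ / z₁ : ℂ) ≠ 0 := div_ne_zero hz₂ hz₁
  set w : ℂ := z₂ / z₁ with hw_def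
  -- Step 1: density gives sequences a, b with ξ^a η^b → w
  have hmem : ∀ k : ℕ, ∃ a b : ℤ, dist w (ξ ^ a * η ^ b) < 1/(k+1 : ℝ) := by
    intro k
    obtain ⟨y, ⟨aa, bb, rfl⟩, hy⟩ :=
      Metric.mem_closure_iff.mp (hdense w) (1/(k+1 : ℝ)) (by positivity)
    exact ⟨aa, bb, hy⟩
  choose a b hab using hmem
  have hfw : Tendsto (fun k => ξ ^ a k * η ^ b k) atTop (𝓝 w) := by
    rw [tendsto_iff_dist_tendsto_zero]
    refine squeeze_zero (fun k => dist_nonneg) (fun k => ?_)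
      tendsto_one_div_add_atTop_nhds_zero_nat
    rw [dist_comm]; exact (hab k).le
  -- unit parts
  set uξ : ℂ := ξ / (‖ξ‖ : ℂ) with huξ_def
  set uη : ℂ := η / (‖η‖ : ℂ) with huη_def
  have huξ1 : ‖uξ‖ = 1 := by
    rw [huξ_def, norm_div, Complex.norm_real, Real.norm_eq_abs, abs_of_nonneg (norm_nonneg ξ),
      div_self (norm_ne_zero_iff.mpr hξ)]
  have huη1 : ‖uη‖ = 1 := by
    rw [huη_def, norm_div, Complex.norm_real, Real.norm_eq_abs, abs_of_nonneg (norm_nonneg η),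
      div_self (norm_ne_zero_iff.mpr hη)]
  have huξ0 : uξ ≠ 0 := by intro h; rw [h] at huξ1; simp at huξ1
  have huη0 : uη ≠ 0 := by intro h; rw [h] at huη1; simp at huη1
  -- Step 2: compactness, subsequence
  have hmemS : ∀ k : ℕ, ((uξ ^ a k, uη ^ b k) : ℂ × ℂ) ∈
      Metric.sphere (0:ℂ) 1 ×ˢ Metric.sphere (0:ℂ) 1 := by
    intro k
    constructor <;> rw [mem_sphere_zero_iff_norm, norm_zpow]
    · rw [huξ1, one_zpow]
    · rw [huη1, one_zpow]
  obtain ⟨⟨u, v⟩, hmem_uv, φ, hφ, hlim⟩ :=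
    ((isCompact_sphere (0:ℂ) 1).prod (isCompact_sphere (0:ℂ) 1)).tendsto_subseq hmemS
  have hu : Tendsto (fun k => uξ ^ a (φ k)) atTop (𝓝 u) :=
    (continuous_fst.tendsto _).comp hlim
  have hv : Tendsto (fun k => uη ^ b (φ k)) atTop (𝓝 v) :=
    (continuous_snd.tendsto _).comp hlim
  have hu1 : ‖u‖ = 1 := by
    have := hmem_uv.1; rwa [mem_sphere_zero_iff_norm] at this
  have hv1 : ‖v‖ = 1 := by
    have := hmem_uv.2; rwa [mem_sphere_zero_iff_norm] at this
  have hu0 : u ≠ 0 := by intro h; rw [h] at hu1; simp at hu1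
  have hv0 : v ≠ 0 := by intro h; rw [h] at hv1; simp at hv1
  -- Step 3: u*v = w/|w|
  have hfwφ : Tendsto (fun k => ξ ^ a (φ k) * η ^ b (φ k)) atTop (𝓝 w) :=
    hfw.comp hφ.tendsto_atTop
  have huv : u * v = w / (‖w‖ : ℂ) := by
    refine tendsto_nhds_unique (hu.mul hv) ?_
    exact (tendsto_div_abs hw hfwφ).congr fun k => (unit_prod_eq ξ η _ _).symm
  -- Step 4: take c = t₁ / u in H
  set t₁ : ℂ := (starRingEnd ℂ) z₁ / (‖z₁‖ : ℂ) with ht₁_def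
  set t₂ : ℂ := (starRingEnd ℂ) z₂ / (‖z₂‖ : ℂ) with ht₂_def
  have ht₁1 : ‖t₁‖ = 1 := by
    rw [ht₁_def, norm_div, Complex.norm_conj, Complex.norm_real, Real.norm_eq_abs,
      abs_of_nonneg (norm_nonneg z₁), div_self (norm_ne_zero_iff.mpr hz₁)]
  set c : ℂ := t₁ / u with hc_def
  have hc1 : ‖c‖ = 1 := by rw [hc_def, norm_div, ht₁1, hu1, div_one]
  have hc0 : c ≠ 0 := by intro h; rw [h] at hc1; simp at hc1
  have hcH : c ∈ Hset ξ η := by rw [hH]; exact hc1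
  obtain ⟨-, p, q, hpq1, hpc⟩ := hcH
  -- Step 5: uη^q → 1/c
  have hone : Tendsto (fun k => uξ ^ p k * uη ^ q k) atTop (𝓝 1) := by
    have h := tendsto_div_abs one_ne_zero hpq1
    simp only [norm_one, Complex.ofReal_one, div_one] at h
    exact h.congr fun k => (unit_prod_eq ξ η _ _).symm
  have hq : Tendsto (fun k => uη ^ q k) atTop (𝓝 (1 / c)) := by
    have h := hone.div hpc hc0
    refine h.congr fun k => ?_
    show uξ ^ p k * uη ^ q k / uξ ^ p k = uη ^ q k
    exact mul_div_cancel_left₀ _ (zpow_ne_zero _ huξ0)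
  -- algebra: c = v * t₂
  have hcvt : c = v * t₂ := by
    have hk := key_ident z₁ z₂ hz₁ hz₂
    rw [← ht₁_def, ← ht₂_def, ← hw_def, ← huv] at hk
    rw [hc_def, hk]
    field_simp
  -- assemble
  refine ⟨fun k => a (φ k) + p k, fun k => -(b (φ k) + q k), ?_, ?_, ?_⟩
  · have h1 : Tendsto (fun k => (z₁/z₂) * (ξ ^ a (φ k) * η ^ b (φ k)) *
        (ξ ^ p k * η ^ q k)) atTop (𝓝 ((z₁/z₂) * w * 1)) :=
      (tendsto_const_nhds.mul hfwφ).mul hpq1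
    have hlimpt : (z₁/z₂) * w * 1 = 1 := by
      rw [hw_def, mul_one]; field_simp
    rw [hlimpt] at h1
    refine h1.congr fun k => ?_
    rw [zpow_add₀ hξ, zpow_neg, zpow_add₀ hη]
    field_simp
  · have h1 : Tendsto (fun k => uξ ^ a (φ k) * uξ ^ p k) atTop (𝓝 (u * c)) :=
      hu.mul hpc
    have : u * c = t₁ := by rw [hc_def]; field_simp
    rw [this] at h1
    exact h1.congr fun k => (zpow_add₀ huξ0 _ _).symm
  · have hvc0 : v * (1/c) ≠ 0 := mul_ne_zero hv0 (by simpa using hc0)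
    have h1 : Tendsto (fun k => (uη ^ b (φ k) * uη ^ q k)⁻¹) atTop
        (𝓝 ((v * (1/c))⁻¹)) := (hv.mul hq).inv₀ hvc0
    have h2 : (v * (1/c))⁻¹ = t₂ := by
      rw [hcvt]; field_simp
    rw [h2] at h1
    refine h1.congr fun k => ?_
    rw [zpow_neg, zpow_add₀ huη0]
end

section
/- Let u, v ∈ ℂ and set ξ = e^{2πiu}, η = e^{2πiv}. Suppose {ξ^m · η^n : m, n ∈ ℤ} is dense in ℂ, Re(v)·Im(u) ≠ 0, and the ratio (Re(u)·Im(v))/(Re(v)·Im(u)) is a rational number. Then H(ξ,η) is a finite set. -/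
open Filter Topology

/-- Key estimate: distance to nearest integer is controlled by `|e^{2πiθ}-1|`. -/
lemma round_dist_le (θ : ℝ) :
    |θ - round θ| ≤ ‖Complex.exp (2 * Real.pi * Complex.I * θ) - 1‖ := by
  set l : ℤ := round θ
  set δ : ℝ := θ - l with hδ
  have hδle : |δ| ≤ 1/2 := by simpa using abs_sub_round θ
  set x : ℝ := 2 * Real.pi * δ with hx
  have hexp : Complex.exp (2 * Real.pi * Complex.I * θ) = Complex.exp ((x : ℂ) * Complex.I) := by
    have h1 : (θ : ℂ) = (δ : ℂ) + (l : ℂ) := by push_cast [hδ]; ring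
    rw [h1, mul_add, Complex.exp_add,
      show (2 : ℂ) * Real.pi * Complex.I * (l : ℂ) = (l : ℂ) * (2 * Real.pi * Complex.I) by ring,
      Complex.exp_int_mul_two_pi_mul_I, mul_one]
    congr 1
    push_cast [hx]
    ring
  rw [hexp]
  have him : (Complex.exp ((x:ℂ) * Complex.I) - 1).im = Real.sin x := by
    simp [Complex.exp_ofReal_mul_I_im]
  have hre : (Complex.exp ((x:ℂ) * Complex.I) - 1).re = Real.cos x - 1 := by
    simp [Complex.exp_ofReal_mul_I_re]
  rcases le_or_gt |δ| (1/4) with h | h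
  · have hb : |Real.sin x| ≤ ‖Complex.exp ((x:ℂ) * Complex.I) - 1‖ := by
      rw [← him]; exact Complex.abs_im_le_norm _
    refine le_trans ?_ hb
    have habs : |Real.sin x| = Real.sin (2*Real.pi*|δ|) := by
      rcases abs_cases δ with ⟨h1, h2⟩ | ⟨h1, h2⟩
      · rw [h1, hx, abs_of_nonneg]
        exact Real.sin_nonneg_of_nonneg_of_le_pi (by positivity) (by nlinarith [Real.pi_pos])
      · rw [h1, show 2*Real.pi*(-δ) = -x by rw [hx]; ring, Real.sin_neg, abs_of_nonpos]
        exact Real.sin_nonpos_of_nonpos_of_neg_pi_le (by nlinarith [Real.pi_pos])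
          (by nlinarith [Real.pi_pos])
    rw [habs]
    have hj := Real.mul_le_sin (x := 2*Real.pi*|δ|) (by positivity) (by nlinarith [Real.pi_pos])
    calc |δ| ≤ 2/Real.pi * (2*Real.pi*|δ|) := by
          rw [div_mul_eq_mul_div, mul_comm, le_div_iff₀ Real.pi_pos]
          nlinarith [Real.pi_pos, abs_nonneg δ]
      _ ≤ Real.sin (2*Real.pi*|δ|) := hj
  · have hb : (1:ℝ) - Real.cos x ≤ ‖Complex.exp ((x:ℂ) * Complex.I) - 1‖ := by
      calc (1:ℝ) - Real.cos x ≤ |Real.cos x - 1| := by rw [abs_sub_comm]; exact le_abs_self _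
        _ = |(Complex.exp ((x:ℂ) * Complex.I) - 1).re| := by rw [hre]
        _ ≤ _ := Complex.abs_re_le_norm _
    have hcos : Real.cos x ≤ 0 := by
      have hc : Real.cos x = Real.cos (2*Real.pi*|δ|) := by
        rcases abs_cases δ with ⟨h1,_⟩|⟨h1,_⟩
        · rw [h1, hx]
        · rw [h1, show 2*Real.pi*(-δ) = -x by rw [hx]; ring, Real.cos_neg]
      rw [hc]
      exact Real.cos_nonpos_of_pi_div_two_le_of_le (by nlinarith [Real.pi_pos])
        (by nlinarith [Real.pi_pos])
    calc |δ| ≤ 1/2 := hδle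
      _ ≤ 1 - Real.cos x := by linarith
      _ ≤ _ := hb

lemma tendsto_of_exp_tendsto_one {y : ℕ → ℝ}
    (h : Tendsto (fun k => Real.exp (y k)) atTop (𝓝 1)) : Tendsto y atTop (𝓝 0) := by
  have hlog : Tendsto (fun k => Real.log (Real.exp (y k))) atTop (𝓝 (Real.log 1)) :=
    ((Real.continuousAt_log one_ne_zero).tendsto).comp h
  simpa [Real.log_exp, Real.log_one] using hlog

lemma tendsto_sub_round {x : ℕ → ℝ}
    (h : Tendsto (fun k => Complex.exp (2 * Real.pi * Complex.I * (x k))) atTop (𝓝 1)) :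
    Tendsto (fun k => x k - round (x k)) atTop (𝓝 0) := by
  have hg : Tendsto (fun k => ‖
      Complex.exp (2 * Real.pi * Complex.I * (x k)) - 1‖) atTop (𝓝 0) := by
    have := (h.sub (tendsto_const_nhds (x := (1:ℂ))))
    have h0 : Tendsto (fun k => Complex.exp (2 * Real.pi * Complex.I * (x k)) - 1)
        atTop (𝓝 0) := by simpa using this
    simpa [Function.comp_def] using (continuous_norm.tendsto 0).comp h0
  exact squeeze_zero_norm (fun k => by
    simpa [Real.norm_eq_abs] using round_dist_le (x k)) hg
/-- Let ξ = e^{2πiu}, η = e^{2πiv}, with {ξ^m η^n} dense in ℂ,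
Re(v)·Im(u) ≠ 0 and (Re(u)·Im(v))/(Re(v)·Im(u)) rational. Then H(ξ,η) is finite. -/
theorem Hset_finite_of_rational_ratio (u v : ℂ) (ξ η : ℂ)
    (hξ : ξ = Complex.exp (2 * Real.pi * Complex.I * u))
    (hη : η = Complex.exp (2 * Real.pi * Complex.I * v))
    (hdense : Dense {z : ℂ | ∃ m n : ℤ, z = ξ ^ m * η ^ n})
    (hne : v.re * u.im ≠ 0)
    (hrat : ∃ q : ℚ, (u.re * v.im) / (v.re * u.im) = (q : ℝ)) :
    (Hset ξ η).Finite := by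
  obtain ⟨q, hq⟩ := hrat
  set a := u.re with ha
  set b := u.im with hb
  set c := v.re with hc
  set d := v.im with hd
  have hcb : c * b ≠ 0 := hne
  have hc0 : c ≠ 0 := left_ne_zero_of_mul hcb
  have hb0 : b ≠ 0 := right_ne_zero_of_mul hcb
  have had : a * d = q * (c * b) := by
    rw [div_eq_iff hcb] at hq; linarith [hq]
  by_cases hD : a * d - c * b = 0
  · -- degenerate case: contradict density
    exfalso
    have hd0 : d ≠ 0 := by
      intro h; rw [h, mul_zero] at hD; exact hcb (by linarith)
    have hu : u = ((b / d : ℝ) : ℂ) * v := by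
      refine Complex.ext ?_ ?_
      · simp only [Complex.mul_re, Complex.ofReal_re, Complex.ofReal_im, ← ha, ← hc, ← hd,
          zero_mul, sub_zero]
        field_simp
        nlinarith [hD]
      · simp only [Complex.mul_im, Complex.ofReal_re, Complex.ofReal_im, ← hb, ← hc, ← hd,
          zero_mul, add_zero]
        field_simp
    have h1 : (-1 : ℂ) ∈ closure {z : ℂ | ∃ m n : ℤ, z = ξ ^ m * η ^ n} := hdense (-1)
    rw [mem_closure_iff_seq_limit] at h1
    obtain ⟨w, hw, hwlim⟩ := h1
    choose mm nn hwe using hw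
    set s : ℕ → ℝ := fun j => mm j * (b / d) + nn j with hs
    have hwj : ∀ j, w j = Complex.exp (2 * Real.pi * Complex.I * (s j : ℂ) * v) := by
      intro j
      rw [hwe j, hξ, hη, ← Complex.exp_int_mul, ← Complex.exp_int_mul, ← Complex.exp_add]
      congr 1
      rw [hu, hs]
      push_cast
      ring
    have habsw : ∀ j, ‖w j‖ = Real.exp (-(2 * Real.pi * d) * s j) := by
      intro j
      rw [hwj j, Complex.norm_exp]
      congr 1
      simp only [Complex.mul_re, Complex.mul_im, Complex.I_re, Complex.I_im,
        Complex.ofReal_re, Complex.ofReal_im, Complex.re_ofNat, Complex.im_ofNat, ← hc, ← hd]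
      field_simp
      ring
    have habslim : Tendsto (fun j => Real.exp (-(2 * Real.pi * d) * s j)) atTop (𝓝 1) := by
      have h0 := (continuous_norm.tendsto (-1 : ℂ)).comp hwlim
      simp only [Function.comp_def, habsw, norm_neg, norm_one] at h0
      simpa using h0
    have hC0 : -(2 * Real.pi * d) ≠ 0 :=
      neg_ne_zero.mpr (mul_ne_zero (mul_ne_zero two_ne_zero Real.pi_ne_zero) hd0)
    have hs0 : Tendsto s atTop (𝓝 0) := by
      have h2 := tendsto_of_exp_tendsto_one habslim
      have h3 := h2.const_mul ((-(2 * Real.pi * d))⁻¹)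
      rw [mul_zero] at h3
      refine h3.congr fun j => ?_
      field_simp
    have hw1 : Tendsto w atTop (𝓝 1) := by
      have hcont : Continuous fun t : ℝ => Complex.exp (2 * Real.pi * Complex.I * (t : ℂ) * v) :=
        Complex.continuous_exp.comp
          ((continuous_const.mul Complex.continuous_ofReal).mul continuous_const)
      have h4 := (hcont.tendsto 0).comp hs0
      simp only [Function.comp_def, Complex.ofReal_zero, mul_zero, zero_mul,
        Complex.exp_zero] at h4
      exact h4.congr fun j => (hwj j).symm
    exact absurd (tendsto_nhds_unique hwlim hw1) (by norm_num)
  · -- main case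
    have hq1 : (q : ℝ) ≠ 1 := by
      intro h; rw [h, one_mul] at had; exact hD (by linarith)
    set r : ℚ := q / (q - 1) with hr
    have hq1' : (q : ℝ) - 1 ≠ 0 := sub_ne_zero.mpr hq1
    have hqr : ((q : ℝ) - 1) * (c * b) = a * d - c * b := by rw [had]; ring
    have hrr : (a * d) / (a * d - c * b) = (r : ℝ) := by
      rw [← hqr, had, hr]
      push_cast
      rw [mul_div_mul_right _ _ hcb]
    set N : ℕ := r.den with hN
    apply Set.Finite.subset (Polynomial.nthRootsFinset N (1 : ℂ)).finite_toSet
    intro z hz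
    obtain ⟨hz1, n, m, h1, h2⟩ := hz
    rw [Finset.mem_coe, Polynomial.mem_nthRootsFinset r.pos (1 : ℂ)]
    set x : ℕ → ℝ := fun k => n k * a + m k * c with hx
    set y : ℕ → ℝ := fun k => n k * b + m k * d with hy
    have hcu : u = (a : ℂ) + (b : ℂ) * Complex.I := (Complex.re_add_im u).symm
    have hcv : v = (c : ℂ) + (d : ℂ) * Complex.I := (Complex.re_add_im v).symm
    have hprod : ∀ k, ξ ^ n k * η ^ m k =
        Complex.exp (2 * Real.pi * Complex.I * (x k : ℂ)) *
          Complex.exp ((-(2 * Real.pi * y k) : ℝ) : ℂ) := by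
      intro k
      rw [hξ, hη, ← Complex.exp_int_mul, ← Complex.exp_int_mul, ← Complex.exp_add,
        ← Complex.exp_add]
      congr 1
      rw [hcu, hcv, hx, hy]
      push_cast
      linear_combination (2 * (Real.pi : ℂ) * ((n k : ℂ) * (b : ℂ) + (m k : ℂ) * (d : ℂ))) *
        Complex.I_sq
    have habs : ∀ k, ‖ξ ^ n k * η ^ m k‖ = Real.exp (-(2 * Real.pi * y k)) := by
      intro k
      rw [hprod k, norm_mul, Complex.norm_exp, Complex.norm_exp]
      have h5 : (2 * (Real.pi : ℂ) * Complex.I * (x k : ℂ)).re = 0 := by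
        simp [Complex.mul_re, Complex.mul_im]
      rw [h5, Real.exp_zero, one_mul, Complex.ofReal_re]
    have hylim : Tendsto y atTop (𝓝 0) := by
      have h6 := (continuous_norm.tendsto (1 : ℂ)).comp h1
      simp only [Function.comp_def, habs, norm_one] at h6
      have h7 := tendsto_of_exp_tendsto_one h6
      have h8 := h7.const_mul ((-(2 * Real.pi))⁻¹)
      rw [mul_zero] at h8
      refine h8.congr fun k => ?_
      have hpi : (2 * Real.pi) ≠ 0 := by positivity
      field_simp
    have hcexp : Continuous fun t : ℝ => Complex.exp ((t : ℝ) : ℂ) :=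
      Complex.continuous_exp.comp Complex.continuous_ofReal
    have hexplim : Tendsto (fun k => Complex.exp (2 * Real.pi * Complex.I * (x k : ℂ)))
        atTop (𝓝 1) := by
      have h9a := hylim.const_mul (2 * Real.pi)
      rw [mul_zero] at h9a
      have h9 := (hcexp.tendsto 0).comp h9a
      simp only [Function.comp_def, Complex.ofReal_zero, Complex.exp_zero] at h9
      have h10 := h1.mul h9
      rw [mul_one] at h10
      refine h10.congr fun k => ?_
      have hzero : ((-(2 * Real.pi * y k) : ℝ) : ℂ) + ((2 * Real.pi * y k : ℝ) : ℂ) = 0 := by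
        push_cast; ring
      rw [hprod k, mul_assoc, ← Complex.exp_add, hzero, Complex.exp_zero, mul_one]
    set l : ℕ → ℤ := fun k => round (x k) with hl
    have hxl : Tendsto (fun k => x k - l k) atTop (𝓝 0) := tendsto_sub_round hexplim
    set e : ℕ → ℝ := fun k => (r : ℝ) * (x k - l k) - (a * c / (a * d - c * b)) * y k with he
    have helim : Tendsto e atTop (𝓝 0) := by
      have h11 := (hxl.const_mul ((r : ℝ))).sub (hylim.const_mul (a * c / (a * d - c * b)))
      simpa using h11
    have hkey : ∀ k, a * n k = (r : ℝ) * l k + e k := by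
      intro k
      have hnk : (n k : ℝ) * (a * d - c * b) = d * x k - c * y k := by
        simp only [hx, hy]; push_cast; ring
      simp only [he, ← hrr]
      field_simp
      linear_combination a * hnk
    have hxi : ξ / ((‖ξ‖ : ℝ) : ℂ) = Complex.exp (2 * Real.pi * Complex.I * (a : ℂ)) := by
      rw [hξ, Complex.norm_exp]
      have hre : (2 * (Real.pi : ℂ) * Complex.I * u).re = -(2 * Real.pi * b) := by
        simp [Complex.mul_re, Complex.mul_im, ← hb]
      rw [hre, Complex.ofReal_exp, ← Complex.exp_sub]
      congr 1
      rw [hcu]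
      push_cast
      linear_combination (2 * (Real.pi : ℂ) * (b : ℂ)) * Complex.I_sq
    have hpow : ∀ k, (ξ / ((‖ξ‖ : ℝ) : ℂ)) ^ n k =
        Complex.exp (2 * Real.pi * Complex.I * ((a * n k : ℝ) : ℂ)) := by
      intro k
      rw [hxi, ← Complex.exp_int_mul]
      congr 1
      push_cast
      ring
    set W : ℕ → ℂ := fun k => Complex.exp (2 * Real.pi * Complex.I * (((r : ℝ) * l k : ℝ) : ℂ))
      with hW
    have hWlim : Tendsto W atTop (𝓝 z) := by
      have h12a := helim.const_mul (-1 : ℝ)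
      rw [mul_zero] at h12a
      have hcont2 : Continuous fun t : ℝ => Complex.exp (2 * Real.pi * Complex.I * (t : ℂ)) :=
        Complex.continuous_exp.comp (continuous_const.mul Complex.continuous_ofReal)
      have h13 := (hcont2.tendsto 0).comp h12a
      simp only [Function.comp_def, Complex.ofReal_zero, mul_zero, Complex.exp_zero] at h13
      have h14 := h2.mul h13
      rw [mul_one] at h14
      refine h14.congr fun k => ?_
      rw [hpow k, ← Complex.exp_add, hW]
      congr 1
      have hkc := congrArg Complex.ofReal (hkey k)
      have hek := congrArg Complex.ofReal
        (show e k = (r : ℝ) * (x k - l k) - a * c / (a * d - c * b) * y k from rfl)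
      push_cast at hkc hek ⊢
      linear_combination (2 * (Real.pi : ℂ) * Complex.I) * hkc
    have hWN : ∀ k, W k ^ N = 1 := by
      intro k
      rw [hW, ← Complex.exp_nat_mul]
      have hrN : (r : ℝ) * (N : ℝ) = (r.num : ℝ) := by
        rw [hN]; exact_mod_cast Rat.mul_den_eq_num r
      have hcast := congrArg Complex.ofReal hrN
      have harg : (N : ℂ) * (2 * Real.pi * Complex.I * (((r : ℝ) * l k : ℝ) : ℂ)) =
          ((r.num * l k : ℤ) : ℂ) * (2 * Real.pi * Complex.I) := by
        push_cast at hcast ⊢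
        linear_combination (2 * (Real.pi : ℂ) * Complex.I * (l k : ℂ)) * hcast
      rw [harg]
      exact Complex.exp_int_mul_two_pi_mul_I _
    have h15 : Tendsto (fun k => W k ^ N) atTop (𝓝 (z ^ N)) := hWlim.pow N
    have h16 : Tendsto (fun _ : ℕ => (1 : ℂ)) atTop (𝓝 (z ^ N)) := h15.congr fun k => hWN k
    exact (tendsto_nhds_unique h16 tendsto_const_nhds)
end

section
/- Let u, v ∈ ℂ and set ξ = e^{2πiu}, η = e^{2πiv}. Suppose {ξ^m · η^n : m, n ∈ ℤ} is dense in ℂ, Re(u)·Im(v) ≠ 0, and there are integers p, q with q ≠ 0, p ≠ q, and q·Re(v)·Im(u) = p·Re(u)·Im(v). Then every z ∈ H(ξ,η) satisfies z^{q−p} = 1; in particular H(ξ,η) is contained in the set of |q−p|-th roots of unity. -/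
open Filter Topology

private lemma real_exp_tendsto_one {x : ℕ → ℝ}
    (h : Tendsto (fun k => Real.exp (x k)) atTop (𝓝 1)) :
    Tendsto x atTop (𝓝 0) := by
  have := ((Real.continuousAt_log one_ne_zero).tendsto.comp h)
  simpa [Function.comp_def, Real.log_exp] using this

/-- Let ξ = e^{2πiu}, η = e^{2πiv}, with {ξ^m η^n} dense in ℂ,
Re(u)·Im(v) ≠ 0, and integers p, q with q ≠ 0, p ≠ q and
q·Re(v)·Im(u) = p·Re(u)·Im(v). Then every z ∈ H(ξ,η) satisfies z^{q−p} = 1; in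
particular H(ξ,η) is contained in the |q−p|-th roots of unity. -/
theorem Hset_subset_roots_of_unity (u v : ℂ) (ξ η : ℂ)
    (hξ : ξ = Complex.exp (2 * Real.pi * Complex.I * u))
    (hη : η = Complex.exp (2 * Real.pi * Complex.I * v))
    (hdense : Dense {z : ℂ | ∃ m n : ℤ, z = ξ ^ m * η ^ n})
    (hne : u.re * v.im ≠ 0)
    (p q : ℤ) (hq : q ≠ 0) (hpq : p ≠ q)
    (hrel : (q : ℝ) * (v.re * u.im) = (p : ℝ) * (u.re * v.im)) :
    (∀ z ∈ Hset ξ η, z ^ (q - p) = 1) ∧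
      Hset ξ η ⊆ {z : ℂ | z ^ (q - p).natAbs = 1} := by
  have hπ : (0:ℝ) < Real.pi := Real.pi_pos
  have hd : v.im ≠ 0 := fun h => hne (by simp [h])
  have key : ∀ z ∈ Hset ξ η, z ^ (q - p) = 1 := by
    rintro z ⟨hz1, n, m, h1, h2⟩
    have hz0 : z ≠ 0 := by
      intro h; rw [h] at hz1; simp at hz1
    -- key complex identity for powers
    have hexp : ∀ N M : ℤ, ξ ^ N * η ^ M =
        Complex.exp ((-(2 * Real.pi * ((N:ℝ) * u.im + (M:ℝ) * v.im)) : ℝ)) *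
        Complex.exp (2 * Real.pi * Complex.I * (((N:ℝ) * u.re + (M:ℝ) * v.re : ℝ) : ℂ)) := by
      intro N M
      rw [hξ, hη, ← Complex.exp_int_mul, ← Complex.exp_int_mul, ← Complex.exp_add,
        ← Complex.exp_add]
      congr 1
      apply Complex.ext <;>
        simp [Complex.mul_re, Complex.mul_im, Complex.add_re, Complex.add_im] <;> ring
    -- identity for the unimodular part
    have habsξ : (‖ξ‖ : ℝ) = Real.exp (-(2 * Real.pi * u.im)) := by
      rw [hξ, Complex.norm_exp]
      congr 1
      simp [Complex.mul_re, Complex.mul_im]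
    have hw : ξ / (‖ξ‖ : ℂ) = Complex.exp (2 * Real.pi * Complex.I * (u.re : ℂ)) := by
      rw [habsξ, hξ, Complex.ofReal_exp, ← Complex.exp_sub]
      congr 1
      apply Complex.ext <;>
        simp [Complex.mul_re, Complex.mul_im] <;> ring
    have hwn : ∀ N : ℤ, (ξ / (‖ξ‖ : ℂ)) ^ N =
        Complex.exp (2 * Real.pi * Complex.I * (((N:ℝ) * u.re : ℝ) : ℂ)) := by
      intro N
      rw [hw, ← Complex.exp_int_mul]
      congr 1
      push_cast
      ring
    set s : ℕ → ℝ := fun k => (n k : ℝ) * u.im + (m k : ℝ) * v.im with hs_def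
    set t : ℕ → ℝ := fun k => (n k : ℝ) * u.re + (m k : ℝ) * v.re with ht_def
    -- step 1: s → 0
    have hs : Tendsto s atTop (𝓝 0) := by
      have habs : Tendsto (fun k => ‖ξ ^ (n k) * η ^ (m k)‖) atTop (𝓝 1) := by
        have := (continuous_norm.tendsto 1).comp h1
        simpa only [Function.comp_def, norm_one] using this
      have h2π : Tendsto (fun k => Real.exp (-(2 * Real.pi * s k))) atTop (𝓝 1) := by
        refine habs.congr fun k => ?_
        rw [hexp (n k) (m k), norm_mul, Complex.norm_exp, Complex.norm_exp]
        have : (2 * (Real.pi:ℂ) * Complex.I * (((n k : ℝ) * u.re + (m k : ℝ) * v.re : ℝ) : ℂ)).re = 0 := by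
          simp [Complex.mul_re, Complex.mul_im]
        rw [Complex.ofReal_re, this, Real.exp_zero, mul_one]
      have h0 : Tendsto (fun k => -(2 * Real.pi * s k)) atTop (𝓝 0) := real_exp_tendsto_one h2π
      have := h0.const_mul (-(1 / (2 * Real.pi)))
      rw [mul_zero] at this
      refine this.congr fun k => ?_
      field_simp
    -- step 2: the unimodular part tends to 1
    have hexps : Tendsto (fun k => Complex.exp ((-(2 * Real.pi * s k) : ℝ))) atTop (𝓝 1) := by
      have hc : Continuous fun r : ℝ => Complex.exp ((-(2 * Real.pi * r) : ℝ)) := by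
        continuity
      have := (hc.tendsto 0).comp hs
      simpa [Function.comp_def] using this
    have hu : Tendsto (fun k => Complex.exp (2 * Real.pi * Complex.I * ((t k : ℝ) : ℂ)))
        atTop (𝓝 1) := by
      have hinv : Tendsto (fun k => (Complex.exp ((-(2 * Real.pi * s k) : ℝ)))⁻¹)
          atTop (𝓝 1) := by
        have := hexps.inv₀ one_ne_zero
        simpa using this
      have := h1.mul hinv
      rw [mul_one] at this
      refine this.congr fun k => ?_
      rw [hexp (n k) (m k)]
      rw [mul_comm (Complex.exp _) (Complex.exp (2 * ↑Real.pi * Complex.I * _)), mul_assoc,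
        mul_inv_cancel₀ (Complex.exp_ne_zero _), mul_one]
    -- step 3: real identity
    set r : ℕ → ℝ := fun k => -((q : ℝ) * v.re / v.im) * s k with hr_def
    have hreal : ∀ k, ((q - p : ℤ) : ℝ) * u.re * (n k : ℝ) = (q : ℝ) * t k + r k := by
      intro k
      simp only [ht_def, hr_def, hs_def]
      field_simp
      push_cast
      linear_combination (n k : ℝ) * hrel
    -- step 4: limit 1 for the target sequence
    have hT1 : Tendsto (fun k =>
        Complex.exp (2 * Real.pi * Complex.I * ((((q - p : ℤ) : ℝ) * u.re * (n k : ℝ) : ℝ) : ℂ)))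
        atTop (𝓝 1) := by
      have hq' : Tendsto (fun k =>
          (Complex.exp (2 * Real.pi * Complex.I * ((t k : ℝ) : ℂ))) ^ q) atTop (𝓝 1) := by
        have hc := continuousAt_zpow₀ (1 : ℂ) q (Or.inl one_ne_zero)
        have := hc.tendsto.comp hu
        simpa [Function.comp_def] using this
      have hr' : Tendsto (fun k => Complex.exp (2 * Real.pi * Complex.I * ((r k : ℝ) : ℂ)))
          atTop (𝓝 1) := by
        have hc : Continuous fun x : ℝ => Complex.exp (2 * Real.pi * Complex.I * ((x : ℝ) : ℂ)) := by
          continuity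
        have hr0 : Tendsto r atTop (𝓝 0) := by
          have := hs.const_mul (-((q : ℝ) * v.re / v.im))
          simpa [hr_def] using this
        have := (hc.tendsto 0).comp hr0
        simpa [Function.comp_def] using this
      have := hq'.mul hr'
      rw [mul_one] at this
      refine this.congr fun k => ?_
      rw [← Complex.exp_int_mul, ← Complex.exp_add]
      congr 1
      rw [show ((((q - p : ℤ) : ℝ) * u.re * (n k : ℝ) : ℝ) : ℂ) = (((q : ℝ) * t k + r k : ℝ) : ℂ) by
        exact_mod_cast congrArg Complex.ofReal (hreal k)]
      push_cast
      ring
    -- step 5: limit z^(q-p) for the same sequence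
    have hT2 : Tendsto (fun k =>
        Complex.exp (2 * Real.pi * Complex.I * ((((q - p : ℤ) : ℝ) * u.re * (n k : ℝ) : ℝ) : ℂ)))
        atTop (𝓝 (z ^ (q - p))) := by
      have hc := continuousAt_zpow₀ z (q - p) (Or.inl hz0)
      have := hc.tendsto.comp h2
      refine this.congr fun k => ?_
      show ((ξ / (‖ξ‖ : ℂ)) ^ (n k)) ^ (q - p) = _
      rw [← zpow_mul, hwn (n k * (q - p))]
      congr 2
      push_cast
      ring
    exact tendsto_nhds_unique hT2 hT1
  refine ⟨key, fun z hz => ?_⟩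
  have h := key z hz
  rcases Int.natAbs_eq (q - p) with h' | h'
  · show z ^ (q - p).natAbs = 1
    rw [← zpow_natCast, ← h', h]
  · show z ^ (q - p).natAbs = 1
    rw [← zpow_natCast, show (((q - p).natAbs : ℤ)) = -(q - p) by omega, zpow_neg, h, inv_one]
end
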